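/- arXiv:1306.3123 — 7 statements merged into one kernel-verified Lean document; each statement's English description precedes it below -/
import Mathlib

section
/- Let u be an infinite word with bounded repetition. Then the periodicity complexity of u tends to infinity: lim_{i→∞} h_u(i) = ∞. -/
open scoped BigOperators ENNReal

namespace PeriodicityComplexity

variable {A : Type*}

/-- The finite word `z` occurs in the infinite word `w` at the (0-based) index `j`,
i.e. `z` occupies positions `j+1, …, j+|z|` of `w`. -/
def OccursAt (w : ℕ → A) (z : List A) (j : ℕ) : Prop :=
  z = List.ofFn (fun t : Fin z.length => w (j + t))

/-- `z` is a (finite) factor of the infinite word `w`. -/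
def IsFactor (w : ℕ → A) (z : List A) : Prop := ∃ j, OccursAt w z j

/-- An infinite word is uniformly recurrent if every factor occurs with bounded gaps. -/
def UniformlyRecurrent (w : ℕ → A) : Prop :=
  ∀ z : List A, IsFactor w z → ∃ N : ℕ, ∀ j : ℕ, ∃ t, j ≤ t ∧ t < j + N ∧ OccursAt w z t

/-- An infinite word is periodic if some `p ≥ 1` is a period of all of it. -/
def Periodic (w : ℕ → A) : Prop := ∃ p : ℕ, 1 ≤ p ∧ ∀ i, w (i + p) = w i

/-- An infinite word is ultimately periodic if some `p ≥ 1` is a period from some point on. -/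
def UltimatelyPeriodic (w : ℕ → A) : Prop :=
  ∃ p : ℕ, 1 ≤ p ∧ ∃ N : ℕ, ∀ i, N ≤ i → w (i + p) = w i

/-- The `e`-fold concatenation `v^e` of a finite word `v`. -/
def wpow (v : List A) (e : ℕ) : List A := (List.replicate e v).flatten

/-- The prefix of length `i` of an infinite word. -/
def wordPrefix (w : ℕ → A) (i : ℕ) : List A := List.ofFn (fun t : Fin i => w t)

/-- `r` is a repetition word at position `i` of the infinite word `w` (`w = uv`, `|u| = i`):
`r` is nonempty, suffix-comparable with `u`, and a prefix of the infinite remainder `v`. -/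
def IsRepWordAt (w : ℕ → A) (i : ℕ) (r : List A) : Prop :=
  r ≠ [] ∧ (r <:+ wordPrefix w i ∨ wordPrefix w i <:+ r) ∧ OccursAt w r i

/-- Local period of an infinite word at position `i`, as an extended nonnegative real
(`⊤` if there is no repetition word at that position). -/
noncomputable def localPeriod (w : ℕ → A) (i : ℕ) : ℝ≥0∞ :=
  sInf ((fun r : List A => (r.length : ℝ≥0∞)) '' {r | IsRepWordAt w i r})

/-- Periodicity complexity `h_w(i) = (1/i) ∑_{j=1}^{i} p_w(j)` of an infinite word. -/
noncomputable def pcomplexity (w : ℕ → A) (i : ℕ) : ℝ≥0∞ :=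
  (∑ j ∈ Finset.Icc 1 i, localPeriod w j) / (i : ℝ≥0∞)

/-- `r` is a repetition word at position `i` of the finite word `v` (`v = xy`, `|x| = i`):
`r` is nonempty, suffix-comparable with `x` and prefix-comparable with `y`. -/
def IsRepWordAtF (v : List A) (i : ℕ) (r : List A) : Prop :=
  r ≠ [] ∧ (r <:+ v.take i ∨ v.take i <:+ r) ∧ (r <+: v.drop i ∨ v.drop i <+: r)

/-- Local period of a finite word at position `i`. -/
noncomputable def localPeriodF (v : List A) (i : ℕ) : ℕ :=
  sInf {n : ℕ | ∃ r : List A, IsRepWordAtF v i r ∧ r.length = n}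

/-- Average local period `h(v) = (1/|v|) ∑_{i=1}^{|v|} p_v(i)` of a finite word. -/
noncomputable def hF (v : List A) : ℝ :=
  (∑ i ∈ Finset.Icc 1 v.length, (localPeriodF v i : ℝ)) / (v.length : ℝ)

/-- An infinite word is of bounded repetition if the exponents of powers of nonempty
words occurring in it are bounded. -/
def BoundedRepetition (w : ℕ → A) : Prop :=
  ∃ E : ℕ, ∀ (v : List A) (e : ℕ), v ≠ [] → IsFactor w (wpow v e) → e ≤ E

/-- `p` is a period of the finite word `z`. -/
def HasPeriodF (z : List A) (p : ℕ) : Prop :=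
  ∀ t : ℕ, t + p < z.length → z[t]? = z[t + p]?

/-- The (least) period of a finite word. -/
noncomputable def periodF (z : List A) : ℕ := sInf {p : ℕ | 1 ≤ p ∧ HasPeriodF z p}

/-- `r` is a return word to `z` in the infinite word `w`: `r` is the factor of `w` between
two consecutive occurrences of `z`. -/
def IsReturnWord (w : ℕ → A) (z r : List A) : Prop :=
  r ≠ [] ∧ ∃ j : ℕ, OccursAt w z j ∧ OccursAt w z (j + r.length) ∧
    (∀ t, j < t → t < j + r.length → ¬ OccursAt w z t) ∧ OccursAt w r j

/-- `l` is the length of some return word to `z` in `w`. -/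
def IsReturnLength (w : ℕ → A) (z : List A) (l : ℕ) : Prop :=
  ∃ r : List A, IsReturnWord w z r ∧ r.length = l

/-- The maximal return time of `z` in `w`. -/
noncomputable def maxReturnTime (w : ℕ → A) (z : List A) : ℕ :=
  sSup {l : ℕ | IsReturnLength w z l}

/-- A finite word is unbordered if no proper nonempty prefix of it is also a suffix. -/
def Unbordered (z : List A) : Prop :=
  ∀ b : List A, b ≠ [] → b.length < z.length → b <+: z → ¬ b <:+ z

/-- A finite word is primitive if it is not a (trivial or nontrivial) power of a word
other than itself. -/
def Primitive (z : List A) : Prop :=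
  ∀ (v : List A) (k : ℕ), z = wpow v k → k = 1

/-- A finite word is Lyndon if it is primitive and lexicographically minimal among its
conjugates: `z ≤ yx` for every factorization `z = xy`. -/
def IsLyndon [LinearOrder A] (z : List A) : Prop :=
  Primitive z ∧ ∀ x y : List A, z = x ++ y → z ≤ y ++ x

end PeriodicityComplexity


namespace PCAux

open List PeriodicityComplexity

variable {B : Type*}
section LexTool
variable {r : B → B → Prop}


lemma not_lex_nil {l : List B} : ¬ List.Lex r l [] := fun h => by cases h

lemma lex_append_self {x s : List B} (hs : s ≠ []) : List.Lex r x (x ++ s) := by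
  induction x with
  | nil =>
    cases s with
    | nil => exact absurd rfl hs
    | cons a t => exact List.Lex.nil
  | cons a x ih => exact List.Lex.cons ih

lemma not_lex_append_self (hirr : ∀ a, ¬ r a a) {x s : List B} :
    ¬ List.Lex r (x ++ s) x := by
  induction x with
  | nil => exact not_lex_nil
  | cons a x ih =>
    intro h
    cases h with
    | rel h => exact hirr a h
    | cons h => exact ih h

lemma lex_irrefl (hirr : ∀ a, ¬ r a a) (x : List B) : ¬ List.Lex r x x := by
  simpa using not_lex_append_self (s := []) hirr (x := x)

lemma lex_cancel_left (hirr : ∀ a, ¬ r a a) {c x y : List B}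
    (h : List.Lex r (c ++ x) (c ++ y)) : List.Lex r x y := by
  induction c with
  | nil => exact h
  | cons a c ih =>
    cases h with
    | rel h => exact absurd h (hirr a)
    | cons h => exact ih h

lemma lex_trans (htr : ∀ a b c, r a b → r b c → r a c) :
    ∀ {x y z : List B}, List.Lex r x y → List.Lex r y z → List.Lex r x z := by
  intro x y z h1
  induction h1 generalizing z with
  | nil =>
    intro h2
    cases h2 with
    | rel h => exact List.Lex.nil
    | cons h => exact List.Lex.nil
  | @rel a as b bs h =>
    intro h2
    cases h2 with
    | rel h' => exact List.Lex.rel (htr _ _ _ h h')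
    | cons h' => exact List.Lex.rel h
  | @cons a as bs h ih =>
    intro h2
    cases h2 with
    | rel h' => exact List.Lex.rel h'
    | cons h' => exact List.Lex.cons (ih h')

lemma lex_asymm (hirr : ∀ a, ¬ r a a) (htr : ∀ a b c, r a b → r b c → r a c)
    {x y : List B} (h1 : List.Lex r x y) (h2 : List.Lex r y x) : False :=
  lex_irrefl hirr x (lex_trans htr h1 h2)

lemma lex_trichotomy (htri : ∀ a b, r a b ∨ a = b ∨ r b a) :
    ∀ (x y : List B), List.Lex r x y ∨ x = y ∨ List.Lex r y x := by
  intro x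
  induction x with
  | nil =>
    intro y
    cases y with
    | nil => exact Or.inr (Or.inl rfl)
    | cons b t => exact Or.inl List.Lex.nil
  | cons a x ih =>
    intro y
    cases y with
    | nil => exact Or.inr (Or.inr List.Lex.nil)
    | cons b t =>
      rcases htri a b with h | h | h
      · exact Or.inl (List.Lex.rel h)
      · subst h
        rcases ih t with h | h | h
        · exact Or.inl (List.Lex.cons h)
        · exact Or.inr (Or.inl (by rw [h]))
        · exact Or.inr (Or.inr (List.Lex.cons h))
      · exact Or.inr (Or.inr (List.Lex.rel h))

lemma prefix_of_le_le {r₁ r₂ : B → B → Prop} (hswap : ∀ a b, r₂ a b ↔ r₁ b a)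
    (hirr : ∀ a, ¬ r₁ a a) (htr : ∀ a b c, r₁ a b → r₁ b c → r₁ a c) :
    ∀ {x y : List B}, (x = y ∨ List.Lex r₁ x y) → (x = y ∨ List.Lex r₂ x y) →
      x <+: y := by
  intro x
  induction x with
  | nil => intro y _ _; exact nil_prefix
  | cons a x ih =>
    intro y h1 h2
    cases y with
    | nil =>
      rcases h1 with h | h
      · exact absurd h (by simp)
      · exact absurd h not_lex_nil
    | cons b t =>
      by_cases hab : a = b
      · subst hab
        have h1' : x = t ∨ List.Lex r₁ x t := by
          rcases h1 with h | h
          · exact Or.inl (by injection h)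
          · cases h with
            | rel h => exact absurd h (hirr a)
            | cons h => exact Or.inr h
        have h2' : x = t ∨ List.Lex r₂ x t := by
          rcases h2 with h | h
          · exact Or.inl (by injection h)
          · cases h with
            | rel h => exact absurd ((hswap a a).mp h) (hirr a)
            | cons h => exact Or.inr h
        exact List.cons_prefix_cons.mpr ⟨rfl, ih h1' h2'⟩
      · exfalso
        have hr1 : r₁ a b := by
          rcases h1 with h | h
          · exact absurd (by injection h) hab
          · cases h with
            | rel h => exact h
            | cons h => exact absurd rfl hab
        have hr2 : r₁ b a := by
          rcases h2 with h | h
          · exact absurd (by injection h) hab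
          · cases h with
            | rel h => exact (hswap a b).mp h
            | cons h => exact absurd rfl hab
        exact hirr a (htr _ _ _ hr1 hr2)


end LexTool

/-! ### maximal elements and maximal suffixes -/

lemma exists_max_rel {τ : Type*} (ρ : τ → τ → Prop)
    (htri : ∀ x y, ρ x y ∨ x = y ∨ ρ y x)
    (htr : ∀ a b c, ρ a b → ρ b c → ρ a c) :
    ∀ L : List τ, L ≠ [] → ∃ m ∈ L, ∀ x ∈ L, x = m ∨ ρ x m := by
  intro L
  induction L with
  | nil => intro h; exact absurd rfl h
  | cons a L ih =>
    intro _
    cases L with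
    | nil =>
      refine ⟨a, by simp, ?_⟩
      intro x hx
      simp at hx
      exact Or.inl hx
    | cons b L' =>
      obtain ⟨m, hm, hmax⟩ := ih (by simp)
      rcases htri a m with h | h | h
      · refine ⟨m, by simp [hm], ?_⟩
        intro x hx
        rcases List.mem_cons.mp hx with rfl | hx
        · exact Or.inr h
        · exact hmax x hx
      · subst h
        refine ⟨a, by simp [hm], ?_⟩
        intro x hx
        rcases List.mem_cons.mp hx with rfl | hx
        · exact Or.inl rfl
        · exact hmax x hx
      · refine ⟨a, by simp, ?_⟩
        intro x hx
        rcases List.mem_cons.mp hx with rfl | hx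
        · exact Or.inl rfl
        · rcases hmax x hx with rfl | hx'
          · exact Or.inr h
          · exact Or.inr (htr _ _ _ hx' h)

lemma exists_maxSuf (r : B → B → Prop)
    (htri : ∀ a b, r a b ∨ a = b ∨ r b a)
    (htr : ∀ a b c, r a b → r b c → r a c)
    (z : List B) (hz : z ≠ []) :
    ∃ v, v ≠ [] ∧ v <:+ z ∧ ∀ s, s ≠ [] → s <:+ z → s = v ∨ List.Lex r s v := by
  classical
  set L := z.tails.filter (fun s => !s.isEmpty) with hL
  have hmemL : ∀ s : List B, s ∈ L ↔ (s ≠ [] ∧ s <:+ z) := by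
    intro s
    simp [hL, List.mem_filter, List.mem_tails, List.isEmpty_iff, and_comm]
  have hLne : L ≠ [] := by
    have : z ∈ L := (hmemL z).mpr ⟨hz, suffix_refl z⟩
    intro h; rw [h] at this; simp at this
  obtain ⟨m, hmL, hmax⟩ := exists_max_rel (List.Lex r)
    (fun x y => by
      rcases lex_trichotomy htri x y with h | h | h
      exacts [Or.inl h, Or.inr (Or.inl h), Or.inr (Or.inr h)])
    (fun a b c h1 h2 => lex_trans htr h1 h2) L hLne
  obtain ⟨hmne, hmsuf⟩ := (hmemL m).mp hmL
  exact ⟨m, hmne, hmsuf, fun s hs hsz => hmax s ((hmemL s).mpr ⟨hs, hsz⟩)⟩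

/-! ### suffix utilities -/

lemma suffix_cancel_right {x y c : List B} (h : x ++ c <:+ y ++ c) : x <:+ y := by
  obtain ⟨g, hg⟩ := h
  rw [← List.append_assoc] at hg
  exact ⟨g, List.append_cancel_right hg⟩

lemma suffix_of_suffix_length_le {s₁ s₂ l : List B}
    (h1 : s₁ <:+ l) (h2 : s₂ <:+ l) (h : s₁.length ≤ s₂.length) : s₁ <:+ s₂ := by
  rw [← List.reverse_prefix] at h1 h2 ⊢
  exact List.prefix_of_prefix_length_le h1 h2 (by simpa using h)

lemma drop_of_suffix {s l : List B} (h : s <:+ l) :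
    l.drop (l.length - s.length) = s := by
  obtain ⟨g, hg⟩ := h
  have hlen : l.length - s.length = g.length := by
    rw [← hg]; simp
  rw [hlen, ← hg, List.drop_left]

lemma take_of_prefix {s l : List B} (h : s <+: l) : l.take s.length = s :=
  (List.prefix_iff_eq_take.mp h).symm

/-! ### periods -/

lemma hasPeriodF_of_drop_eq_take {z : List B} {q : ℕ}
    (h : z.drop q = z.take (z.length - q)) : HasPeriodF z q := by
  intro t ht
  have h1 : z[t + q]? = (z.drop q)[t]? := by
    rw [List.getElem?_drop]; congr 1; omega
  rw [h, List.getElem?_take, if_pos (by omega)] at h1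
  exact h1.symm

lemma hasPeriodF_append_self (x : List B) : HasPeriodF (x ++ x) x.length := by
  intro t ht
  have ht' : t < x.length := by simp at ht; omega
  rw [List.getElem?_append, if_pos ht',
    List.getElem?_append_right (by omega)]
  congr 1
  omega

lemma hasPeriodF_infix {l zz tt ss : List B} {q : ℕ} (h : HasPeriodF l q)
    (he : l = tt ++ (zz ++ ss)) : HasPeriodF zz q := by
  intro i hi
  have key : ∀ m, m < zz.length → zz[m]? = l[tt.length + m]? := by
    intro m hm
    rw [he,
      List.getElem?_append_right (by omega), List.getElem?_append,
      if_pos (by simpa using hm)]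
    congr 1
    omega
  have hl : tt.length + i + q < l.length := by
    rw [he]; simp; omega
  have := h (tt.length + i) (by omega)
  rw [key i (by omega), key (i + q) hi, this]
  congr 1
  omega

lemma hasPeriodF_drop {z : List B} {q : ℕ} (h : HasPeriodF z q) (d : ℕ) :
    HasPeriodF (z.drop d) q := by
  intro t ht
  rw [List.getElem?_drop,
    List.getElem?_drop]
  have hlt : d + t + q < z.length := by simp at ht; omega
  have := h (d + t) hlt
  rw [this]
  congr 1
  omega

lemma hasPeriodF_of_one {z : List B} (h : HasPeriodF z 1) :
    ∀ q, HasPeriodF z q := by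
  intro q
  induction q with
  | zero => intro t ht; rfl
  | succ q ih =>
    intro t ht
    have h1 := ih t (by omega)
    have h2 := h (t + q) (by omega)
    have ha : t + (q + 1) = t + q + 1 := by omega
    rw [ha, h1, h2]

lemma wpow_succ (v : List B) (k : ℕ) : wpow v (k + 1) = v ++ wpow v k := by
  simp [wpow, List.replicate_succ]

lemma take_wpow {z : List B} {q : ℕ} (hq : 0 < q) (h : HasPeriodF z q) :
    ∀ k, k * q ≤ z.length → z.take (k * q) = wpow (z.take q) k := by
  intro k
  induction k generalizing z with
  | zero => intro _; simp [wpow]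
  | succ k ih =>
    intro hk
    rcases Nat.eq_zero_or_pos k with rfl | hkpos
    · simp [wpow_succ, wpow]
    have h2q : 2 * q ≤ z.length := by
      have : 2 ≤ k + 1 := by omega
      calc 2 * q ≤ (k+1) * q := Nat.mul_le_mul_right q this
        _ ≤ z.length := hk
    have hdt : (z.drop q).take q = z.take q := by
      apply List.ext_getElem?
      intro i
      rw [List.getElem?_take, List.getElem?_take, List.getElem?_drop]
      by_cases hi : i < q
      · rw [if_pos hi, if_pos hi]
        have := h i (by omega)
        have hqi : q + i = i + q := by omega
        rw [hqi, ← this]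
      · rw [if_neg hi, if_neg hi]
    have hstep : (k + 1) * q = q + k * q := by ring
    rw [hstep, List.take_add, wpow_succ]
    congr 1
    rw [← hdt]
    exact ih (hasPeriodF_drop h q) (by simp [List.length_drop]; omega)


/-! ### the critical factorization theorem -/

lemma cft_aux (r₁ r₂ : B → B → Prop)
    (hswap : ∀ a b, r₂ a b ↔ r₁ b a)
    (hirr : ∀ a, ¬ r₁ a a) (htr : ∀ a b c, r₁ a b → r₁ b c → r₁ a c)
    (z : List B) (hz : 2 ≤ z.length) (v₁ v₂ : List B)
    (hv₁ne : v₁ ≠ []) (hv₁suf : v₁ <:+ z)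
    (hv₁max : ∀ s, s ≠ [] → s <:+ z → s = v₁ ∨ List.Lex r₁ s v₁)
    (hv₂ne : v₂ ≠ []) (hv₂suf : v₂ <:+ z)
    (hv₂max : ∀ s, s ≠ [] → s <:+ z → s = v₂ ∨ List.Lex r₂ s v₂)
    (hlen : v₁.length ≤ v₂.length) :
    ∃ c, 0 < c ∧ c < z.length ∧
      ∀ rw, IsRepWordAtF z c rw → HasPeriodF z rw.length := by
  have hirr₂ : ∀ a, ¬ r₂ a a := fun a h => hirr a ((hswap a a).1 h)
  by_cases hvz : v₁.length = z.length
  · -- degenerate case : v₁ = z, all letters of z are equal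
    have hper1 : HasPeriodF z 1 := by
      have hv₁z : v₁ = z := hv₁suf.eq_of_length hvz
      have hv₂z : v₂ = z := hv₂suf.eq_of_length (le_antisymm
        (List.IsSuffix.length_le hv₂suf) (hvz ▸ hlen))
      have hdne : z.drop 1 ≠ [] := by
        intro h
        have := congrArg List.length h
        simp at this
        omega
      have hdsuf : z.drop 1 <:+ z := List.drop_suffix 1 z
      have hdlen : (z.drop 1).length = z.length - 1 := by simp
      have hd1 : z.drop 1 = z ∨ List.Lex r₁ (z.drop 1) z := by
        rcases hv₁max _ hdne hdsuf with h | h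
        · exact Or.inl (h.trans hv₁z)
        · exact Or.inr (hv₁z ▸ h)
      have hd2 : z.drop 1 = z ∨ List.Lex r₂ (z.drop 1) z := by
        rcases hv₂max _ hdne hdsuf with h | h
        · exact Or.inl (h.trans hv₂z)
        · exact Or.inr (hv₂z ▸ h)
      have hpre : z.drop 1 <+: z := prefix_of_le_le hswap hirr htr hd1 hd2
      apply hasPeriodF_of_drop_eq_take
      rw [← hdlen]
      exact (take_of_prefix hpre).symm
    exact ⟨1, Nat.one_pos, by omega, fun rw _ => hasPeriodF_of_one hper1 _⟩
  · set c := z.length - v₁.length with hcdef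
    have hv₁len : 0 < v₁.length := List.length_pos_iff.mpr hv₁ne
    have hv₁lt : v₁.length < z.length :=
      lt_of_le_of_ne (List.IsSuffix.length_le hv₁suf) hvz
    have hc0 : 0 < c := by omega
    have hcz : c < z.length := by omega
    have hdropc : z.drop c = v₁ := by
      have := drop_of_suffix hv₁suf
      rwa [← hcdef] at this
    set u := z.take c with hu
    have huv : u ++ v₁ = z := by rw [hu, ← hdropc, List.take_append_drop]
    have hulen : u.length = c := by
      rw [hu, List.length_take]
      exact min_eq_left (le_of_lt hcz)
    have hune : u ≠ [] := by
      intro h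
      rw [h] at hulen
      simp at hulen
      omega
    refine ⟨c, hc0, hcz, ?_⟩
    rintro rw ⟨hrne, hrs, hrp⟩
    rw [← hu] at hrs
    rw [hdropc] at hrp
    -- Case A is impossible
    have caseA : rw <:+ u → rw <+: v₁ → False := by
      intro h1 h2
      obtain ⟨g, hg⟩ := h1
      have hrv : rw ++ v₁ <:+ z := ⟨g, by rw [← List.append_assoc, hg, huv]⟩
      have hrvne : rw ++ v₁ ≠ [] := fun h => hv₁ne (List.append_eq_nil_iff.mp h).2
      obtain ⟨v₃, hv₃⟩ := h2
      rcases hv₁max _ hrvne hrv with he | hl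
      · have := congrArg List.length he
        simp at this
        exact hrne this
      · have hl2 : List.Lex r₁ (rw ++ v₁) (rw ++ v₃) := by rw [hv₃]; exact hl
        have hl' : List.Lex r₁ v₁ v₃ := lex_cancel_left hirr hl2
        rcases eq_or_ne v₃ [] with h0 | h0
        · rw [h0] at hl'
          exact not_lex_nil hl'
        · have hv₃suf : v₃ <:+ z := List.IsSuffix.trans ⟨rw, hv₃⟩ hv₁suf
          rcases hv₁max v₃ h0 hv₃suf with he | hl2
          · rw [he] at hl'
            exact lex_irrefl hirr _ hl'
          · exact lex_asymm hirr htr hl' hl2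
    rcases hrs with h1 | h1
    · rcases hrp with h2 | h2
      · exact absurd (caseA h1 h2) not_false
      · -- case B2 : rw <:+ u, v₁ <+: rw : impossible
        exfalso
        obtain ⟨s, hs⟩ := h2
        obtain ⟨g, hg⟩ := h1
        have hrv : rw ++ v₁ <:+ z := ⟨g, by rw [← List.append_assoc, hg, huv]⟩
        have hrvne : rw ++ v₁ ≠ [] := fun h => hv₁ne (List.append_eq_nil_iff.mp h).2
        rcases hv₁max _ hrvne hrv with he | hl
        · have := congrArg List.length he
          simp at this
          exact hrne this
        · rw [← hs, List.append_assoc] at hl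
          exact not_lex_append_self hirr hl
    · rcases hrp with h2 | h2
      · -- case C : u <:+ rw, rw <+: v₁
        obtain ⟨t, ht⟩ := h1
        obtain ⟨v₃, hv₃⟩ := h2
        rcases eq_or_ne t [] with ht0 | ht0
        · exfalso
          rw [ht0, List.nil_append] at ht
          exact caseA (by rw [← ht]) ⟨v₃, hv₃⟩
        · have hzdec : z = (u ++ t) ++ (u ++ v₃) := by
            rw [← huv, ← hv₃, ← ht]
            simp [List.append_assoc]
          have hsub : v₃ <+: v₁ := by
            rcases eq_or_ne v₃ [] with h0 | h0
            · rw [h0]; exact List.nil_prefix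
            · have hv₃suf : v₃ <:+ z := List.IsSuffix.trans ⟨rw, hv₃⟩ hv₁suf
              have hv₃lt : v₃.length < v₁.length := by
                have := congrArg List.length hv₃
                simp at this
                have : 0 < rw.length := List.length_pos_iff.mpr hrne
                omega
              apply prefix_of_le_le hswap hirr htr
              · rcases hv₁max v₃ h0 hv₃suf with he | hl
                · exact absurd (congrArg List.length he) (by omega)
                · exact Or.inr hl
              · have h12 : v₁ <:+ v₂ := suffix_of_suffix_length_le hv₁suf hv₂suf hlen
                obtain ⟨e, he⟩ := h12
                rcases eq_or_ne e [] with he0 | he0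
                · rcases hv₂max v₃ h0 hv₃suf with he2 | hl2
                  · exact absurd (congrArg List.length (he2.trans (by rw [← he, he0, List.nil_append])))
                      (by omega)
                  · refine Or.inr ?_
                    rw [← he, he0, List.nil_append] at hl2
                    exact hl2
                · have heu : e <:+ u := by
                    apply suffix_cancel_right (y := u)
                    rw [he, huv]
                    exact hv₂suf
                  have huv₃ : u ++ v₃ <:+ z := ⟨u ++ t, by rw [hzdec]⟩
                  have hev₃ : e ++ v₃ <:+ z := by
                    obtain ⟨g, hg⟩ := heu
                    exact List.IsSuffix.trans ⟨g, by rw [← List.append_assoc, hg]⟩ huv₃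
                  have hev₃ne : e ++ v₃ ≠ [] := fun h => he0 (List.append_eq_nil_iff.mp h).1
                  rcases hv₂max _ hev₃ne hev₃ with he2 | hl2
                  · left
                    exact List.append_cancel_left (he2.trans he.symm)
                  · right
                    rw [← he] at hl2
                    exact lex_cancel_left hirr₂ hl2
          -- conclude : z has period rw.length
          apply hasPeriodF_of_drop_eq_take
          have hrlen : rw.length = (u ++ t).length := by
            rw [← ht]
            simp [Nat.add_comm]
          have hd : z.drop rw.length = u ++ v₃ := by
            rw [hrlen, hzdec, List.drop_left]
          have hlen2 : z.length - rw.length = u.length + v₃.length := by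
            rw [hzdec, hrlen]
            simp
            omega
          rw [hd, hlen2, ← huv, List.take_length_add_append, take_of_prefix hsub]
      · -- case B1 : u <:+ rw, v₁ <+: rw
        obtain ⟨t, ht⟩ := h1
        obtain ⟨s, hs⟩ := h2
        have hdec : rw ++ rw = t ++ (z ++ s) := by
          calc rw ++ rw = (t ++ u) ++ (v₁ ++ s) := by rw [ht, hs]
            _ = t ++ ((u ++ v₁) ++ s) := by simp [List.append_assoc]
            _ = t ++ (z ++ s) := by rw [huv]
        exact hasPeriodF_infix (hasPeriodF_append_self rw) hdec

lemma cft (r : B → B → Prop)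
    (hirr : ∀ a, ¬ r a a) (htr : ∀ a b c, r a b → r b c → r a c)
    (htri : ∀ a b, r a b ∨ a = b ∨ r b a)
    (z : List B) (hz : 2 ≤ z.length) :
    ∃ c, 0 < c ∧ c < z.length ∧
      ∀ rw, IsRepWordAtF z c rw → HasPeriodF z rw.length := by
  have hzne : z ≠ [] := by
    intro h; rw [h] at hz; simp at hz
  have hirr' : ∀ a, ¬ (Function.swap r) a a := hirr
  have htr' : ∀ a b c, Function.swap r a b → Function.swap r b c → Function.swap r a c :=
    fun a b c h1 h2 => htr _ _ _ h2 h1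
  have htri' : ∀ a b, Function.swap r a b ∨ a = b ∨ Function.swap r b a := by
    intro a b
    rcases htri a b with h | h | h
    exacts [Or.inr (Or.inr h), Or.inr (Or.inl h), Or.inl h]
  obtain ⟨v₁, h1ne, h1suf, h1max⟩ := exists_maxSuf r htri htr z hzne
  obtain ⟨v₂, h2ne, h2suf, h2max⟩ := exists_maxSuf (Function.swap r) htri' htr' z hzne
  rcases le_total v₁.length v₂.length with h | h
  · exact cft_aux r (Function.swap r) (fun a b => Iff.rfl) hirr htr z hz v₁ v₂
      h1ne h1suf h1max h2ne h2suf h2max h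
  · exact cft_aux (Function.swap r) r (fun a b => Iff.rfl) hirr' htr' z hz v₂ v₁
      h2ne h2suf h2max h1ne h1suf h1max h

/-! ### segments of infinite words -/

section Infinite
variable {A : Type*}

/-- The factor of `w` of length `l` starting at position `s`. -/
def fseg (w : ℕ → A) (s l : ℕ) : List A := List.ofFn (fun t : Fin l => w (s + t))

lemma fseg_length (w : ℕ → A) (s l : ℕ) : (fseg w s l).length = l :=
  List.length_ofFn

lemma fseg_getElem? (w : ℕ → A) (s l i : ℕ) :
    (fseg w s l)[i]? = if i < l then some (w (s + i)) else none := by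
  rw [fseg, List.getElem?_ofFn]
  split <;> rfl

lemma fseg_congr (w : ℕ → A) {s₁ s₂ l₁ l₂ : ℕ} (hs : s₁ = s₂) (hl : l₁ = l₂) :
    fseg w s₁ l₁ = fseg w s₂ l₂ := by rw [hs, hl]

lemma occursAt_iff (w : ℕ → A) (z : List A) (j : ℕ) :
    OccursAt w z j ↔ z = fseg w j z.length := Iff.rfl

lemma occursAt_fseg (w : ℕ → A) (s l : ℕ) : OccursAt w (fseg w s l) s := by
  rw [occursAt_iff]
  apply List.ext_getElem?
  intro i
  rw [fseg_getElem?, fseg_getElem?, fseg_length]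

lemma fseg_take (w : ℕ → A) {m l : ℕ} (s : ℕ) (h : m ≤ l) :
    (fseg w s l).take m = fseg w s m := by
  apply List.ext_getElem?
  intro i
  rw [List.getElem?_take, fseg_getElem?, fseg_getElem?]
  by_cases hi : i < m
  · rw [if_pos hi, if_pos (by omega), if_pos hi]
  · rw [if_neg hi, if_neg hi]

lemma fseg_drop (w : ℕ → A) (s m l : ℕ) :
    (fseg w s l).drop m = fseg w (s + m) (l - m) := by
  apply List.ext_getElem?
  intro i
  rw [List.getElem?_drop, fseg_getElem?, fseg_getElem?]
  by_cases hi : m + i < l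
  · rw [if_pos hi, if_pos (show i < l - m by omega)]
    congr 2
    omega
  · rw [if_neg hi, if_neg (show ¬ i < l - m by omega)]

lemma wordPrefix_eq_fseg (w : ℕ → A) (j : ℕ) : wordPrefix w j = fseg w 0 j := by
  apply List.ext_getElem?
  intro i
  rw [wordPrefix, fseg, List.getElem?_ofFn, List.getElem?_ofFn]
  simp

/-! ### the key lower bound on the local period inside a window -/

lemma window_lemma (w : ℕ → A) (r : A → A → Prop)
    (hirr : ∀ a, ¬ r a a) (htr : ∀ a b c, r a b → r b c → r a c)
    (htri : ∀ a b, r a b ∨ a = b ∨ r b a)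
    (E : ℕ)
    (hbr : ∀ (v : List A) (e : ℕ), v ≠ [] → IsFactor w (wpow v e) → e ≤ E)
    (T s : ℕ) (hT : 1 ≤ T) (hs : (E + 1) * T ≤ s) :
    ∃ j, s < j ∧ j < s + (E + 1) * T ∧
      ∀ rw : List A, IsRepWordAt w j rw → T ≤ rw.length := by
  set l := (E + 1) * T with hl
  have hTl : T ≤ l := by
    calc T = 1 * T := (one_mul T).symm
      _ ≤ (E + 1) * T := Nat.mul_le_mul_right T (by omega)
  have hE1 : 1 ≤ E := by
    have h1 : IsFactor w (wpow [w 0] 1) := by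
      refine ⟨0, ?_⟩
      have heq : wpow [w 0] 1 = fseg w 0 1 := by
        apply List.ext_getElem?
        intro i
        rw [fseg_getElem?]
        simp [wpow]
        cases i with
        | zero => simp
        | succ n => simp
      rw [heq]
      have h2 := occursAt_fseg w 0 1
      have h3 : (fseg w 0 1).length = 1 := fseg_length w 0 1
      exact h2
    exact hbr [w 0] 1 (by simp) h1
  have hl2 : 2 ≤ l := by
    have := Nat.mul_le_mul (show 2 ≤ E + 1 by omega) hT
    omega
  set z := fseg w s l with hz
  have hzlen : z.length = l := fseg_length w s l
  obtain ⟨c, hc0, hcl, hcrit⟩ := cft r hirr htr htri z (by omega)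
  rw [hzlen] at hcl
  refine ⟨s + c, by omega, by omega, ?_⟩
  rintro rw ⟨hrne, hrs, hocc⟩
  by_contra hcon
  push_neg at hcon
  have hrlen : 0 < rw.length := List.length_pos_iff.mpr hrne
  have hrwlt : rw.length < T := hcon
  have hrj : rw.length ≤ s + c := by omega
  -- rw is a suffix of the prefix of w of length s + c
  have hsufcase : rw <:+ wordPrefix w (s + c) := by
    rcases hrs with h | h
    · exact h
    · exfalso
      have := List.IsSuffix.length_le h
      rw [wordPrefix] at this
      simp at this
      omega
  -- rw = fseg w (s + c - rw.length) rw.length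
  have hrw_left : rw = fseg w (s + c - rw.length) rw.length := by
    have h1 := drop_of_suffix hsufcase
    rw [wordPrefix_eq_fseg] at h1
    rw [fseg_length, fseg_drop] at h1
    refine h1.symm.trans ?_
    apply fseg_congr <;> omega
  -- rw = fseg w (s + c) rw.length
  have hrw_right : rw = fseg w (s + c) rw.length := hocc
  -- rw is a repetition word of z at the cut c
  have hrep : IsRepWordAtF z c rw := by
    refine ⟨hrne, ?_, ?_⟩
    · have hztake : z.take c = fseg w s c := fseg_take w s (by omega)
      rcases le_or_gt rw.length c with h | h
      · left
        rw [hztake]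
        have key : (fseg w s c).drop (c - rw.length) = rw := by
          rw [fseg_drop]
          exact (fseg_congr w (by omega) (by omega)).trans hrw_left.symm
        rw [← key]
        exact List.drop_suffix _ _
      · right
        rw [hztake]
        have key := congrArg (fun x => List.drop (rw.length - c) x) hrw_left
        simp only [fseg_drop] at key
        have key2 : rw.drop (rw.length - c) = fseg w s c :=
          key.trans (fseg_congr w (by omega) (by omega))
        rw [← key2]
        exact List.drop_suffix _ _
    · have hzdrop : z.drop c = fseg w (s + c) (l - c) := fseg_drop w s c l
      rcases le_or_gt rw.length (l - c) with h | h
      · left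
        rw [hzdrop]
        have key : (fseg w (s + c) (l - c)).take rw.length = rw :=
          (fseg_take w (s + c) h).trans hrw_right.symm
        rw [← key]
        exact List.take_prefix _ _
      · right
        rw [hzdrop]
        have key := congrArg (fun x => List.take (l - c) x) hrw_right
        simp only [fseg_take w (s + c) (le_of_lt h)] at key
        have key2 : rw.take (l - c) = fseg w (s + c) (l - c) := key
        rw [← key2]
        exact List.take_prefix _ _
  have hper : HasPeriodF z rw.length := hcrit rw hrep
  -- z contains the (E+1)-st power of its prefix of length rw.length
  set q := rw.length with hq
  have hpowlen : (E + 1) * q ≤ z.length := by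
    rw [hzlen, hl]
    exact Nat.mul_le_mul_left (E + 1) (by omega)
  have htake := take_wpow hrlen hper (E + 1) hpowlen
  have hvne : z.take q ≠ [] := by
    intro h
    have := congrArg List.length h
    rw [List.length_take, hzlen] at this
    simp at this
    omega
  have hfac : IsFactor w (wpow (z.take q) (E + 1)) := by
    refine ⟨s, ?_⟩
    rw [← htake, hz, fseg_take w s (by omega)]
    exact occursAt_fseg w s ((E + 1) * q)
  have := hbr (z.take q) (E + 1) hvne hfac
  omega

end Infinite

/-! ### from repetition-word bounds to `localPeriod` bounds -/

lemma localPeriod_ge {A : Type*} {w : ℕ → A} {j T : ℕ}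
    (h : ∀ rw, IsRepWordAt w j rw → T ≤ rw.length) :
    (T : ℝ≥0∞) ≤ localPeriod w j := by
  apply le_sInf
  rintro x ⟨rw, hrw, rfl⟩
  exact Nat.cast_le.mpr (h rw hrw)

/-! ### geometric sums and the layer-cake bound -/

lemma sum_pow_pred : ∀ M : ℕ, ∑ m ∈ Finset.Icc 1 M, 2 ^ (m - 1) = 2 ^ M - 1 := by
  intro M
  induction M with
  | zero => rfl
  | succ M ih =>
    rw [Finset.sum_Icc_succ_top (by omega), ih]
    have h1 : 1 ≤ 2 ^ M := Nat.one_le_two_pow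
    have h2 : (2:ℕ) ^ (M + 1) = 2 ^ M * 2 := pow_succ 2 M
    simp only [Nat.add_sub_cancel]
    omega

lemma layer_pointwise (x : ℝ≥0∞) (M : ℕ) (P : ℕ → Prop) [DecidablePred P]
    (hP : ∀ m, P m → (((2:ℕ) ^ m : ℕ) : ℝ≥0∞) ≤ x) :
    ∑ m ∈ Finset.Icc 1 M, (if P m then (((2:ℕ) ^ (m - 1) : ℕ) : ℝ≥0∞) else 0) ≤ x := by
  rw [← Finset.sum_filter]
  set S := (Finset.Icc 1 M).filter P with hS
  rcases S.eq_empty_or_nonempty with h | h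
  · rw [h]
    simp
  · set m₀ := S.max' h with hm₀
    have hm₀S : m₀ ∈ S := S.max'_mem h
    have hsub : S ⊆ Finset.Icc 1 m₀ := by
      intro m hm
      have h1 : m ∈ Finset.Icc 1 M := Finset.mem_of_mem_filter m hm
      have h2 : m ≤ m₀ := S.le_max' m hm
      rw [Finset.mem_Icc] at h1 ⊢
      exact ⟨h1.1, h2⟩
    calc ∑ m ∈ S, (((2:ℕ) ^ (m - 1) : ℕ) : ℝ≥0∞)
        ≤ ∑ m ∈ Finset.Icc 1 m₀, (((2:ℕ) ^ (m - 1) : ℕ) : ℝ≥0∞) :=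
          Finset.sum_le_sum_of_subset hsub
      _ = (((∑ m ∈ Finset.Icc 1 m₀, 2 ^ (m - 1) : ℕ)) : ℝ≥0∞) := by
          rw [Nat.cast_sum]
      _ = (((2 ^ m₀ - 1 : ℕ)) : ℝ≥0∞) := by rw [sum_pow_pred]
      _ ≤ (((2:ℕ) ^ m₀ : ℕ) : ℝ≥0∞) := Nat.cast_le.mpr (Nat.sub_le _ _)
      _ ≤ x := hP m₀ (Finset.mem_filter.mp hm₀S).2

end PCAux

open PeriodicityComplexity

/-- If `u` is an infinite word with bounded repetition, then its
periodicity complexity tends to infinity. -/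
theorem periodicity_complexity_tendsto_top_of_boundedRepetition
    {A : Type*} (u : ℕ → A) (hbr : BoundedRepetition u) :
    ∀ n : ℕ, ∃ iN : ℕ, ∀ i : ℕ, iN ≤ i → (n : ℝ≥0∞) ≤ pcomplexity u i := by
  classical
  intro n
  obtain ⟨E, hE⟩ := hbr
  have hwo := @WellOrderingRel.isWellOrder A
  set r := @WellOrderingRel A with hrdef
  have hirr : ∀ a : A, ¬ r a a := fun a => irrefl a
  have htr : ∀ a b c : A, r a b → r b c → r a c := fun a b c h1 h2 => _root_.trans h1 h2
  have htri : ∀ a b : A, r a b ∨ a = b ∨ r b a := fun a b => trichotomous a b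
  set M := 4 * (E + 1) * (n + 1) with hM
  refine ⟨3 * ((E + 1) * 2 ^ M), ?_⟩
  intro i hi
  have hlmpos : ∀ m : ℕ, 0 < (E + 1) * 2 ^ m := fun m =>
    Nat.mul_pos (by omega) (Nat.two_pow_pos m)
  -- in every window of length (E+1)*2^m there is a position with local period ≥ 2^m
  have hwin : ∀ m k : ℕ, ∃ j, (k + 1) * ((E + 1) * 2 ^ m) < j ∧
      j < (k + 2) * ((E + 1) * 2 ^ m) ∧ ((2 ^ m : ℕ) : ℝ≥0∞) ≤ localPeriod u j := by
    intro m k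
    obtain ⟨j, h1, h2, h3⟩ := PCAux.window_lemma u r hirr htr htri E hE (2 ^ m)
      ((k + 1) * ((E + 1) * 2 ^ m)) Nat.one_le_two_pow
      (Nat.le_mul_of_pos_left _ (by omega))
    refine ⟨j, h1, ?_, PCAux.localPeriod_ge h3⟩
    have he : (k + 2) * ((E + 1) * 2 ^ m) = (k + 1) * ((E + 1) * 2 ^ m) + (E + 1) * 2 ^ m := by
      ring
    omega
  choose f hf1 hf2 hf3 using hwin
  -- positions with large local period
  set Am : ℕ → Finset ℕ := fun m =>
    (Finset.Icc 1 i).filter (fun j => ((2 ^ m : ℕ) : ℝ≥0∞) ≤ localPeriod u j) with hAm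
  set Km : ℕ → ℕ := fun m => i / ((E + 1) * 2 ^ m) - 1 with hKm
  have hd3 : ∀ m, m ≤ M → 3 ≤ i / ((E + 1) * 2 ^ m) := by
    intro m hm
    rw [Nat.le_div_iff_mul_le (hlmpos m)]
    calc 3 * ((E + 1) * 2 ^ m) ≤ 3 * ((E + 1) * 2 ^ M) := by
          have h2 : (2:ℕ) ^ m ≤ 2 ^ M := Nat.pow_le_pow_right (by omega) hm
          exact Nat.mul_le_mul_left 3 (Nat.mul_le_mul_left (E + 1) h2)
      _ ≤ i := hi
  have hcard : ∀ m, m ≤ M → Km m ≤ (Am m).card := by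
    intro m hm
    have h1 : (Finset.range (Km m)).card = Km m := Finset.card_range _
    rw [← h1]
    apply Finset.card_le_card_of_injOn (fun k => f m k)
    · intro k hk
      rw [Finset.mem_coe, Finset.mem_range] at hk
      have hd := hd3 m hm
      have hKmv : Km m = i / ((E + 1) * 2 ^ m) - 1 := by rw [hKm]
      have hfle : f m k ≤ i := by
        have h2 : k + 2 ≤ i / ((E + 1) * 2 ^ m) := by omega
        have h3 : (k + 2) * ((E + 1) * 2 ^ m) ≤ (i / ((E + 1) * 2 ^ m)) * ((E + 1) * 2 ^ m) :=
          Nat.mul_le_mul_right _ h2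
        have h4 : (i / ((E + 1) * 2 ^ m)) * ((E + 1) * 2 ^ m) ≤ i := Nat.div_mul_le_self i _
        have h5 := hf2 m k
        omega
      have hfpos : 1 ≤ f m k := by
        have h6 := hf1 m k
        omega
      simp only [hAm, Finset.mem_coe, Finset.mem_filter, Finset.mem_Icc]
      exact ⟨⟨hfpos, hfle⟩, hf3 m k⟩
    · intro k1 hk1 k2 hk2 heq
      by_contra hne
      have key : ∀ a b : ℕ, a < b → f m a < f m b := by
        intro a b hab
        have h2 : (a + 2) * ((E + 1) * 2 ^ m) ≤ (b + 1) * ((E + 1) * 2 ^ m) :=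
          Nat.mul_le_mul_right _ (by omega)
        have h3 := hf2 m a
        have h4 := hf1 m b
        omega
      rcases lt_trichotomy k1 k2 with h | h | h
      · exact absurd heq (Nat.ne_of_lt (key _ _ h))
      · exact hne h
      · exact absurd heq.symm (Nat.ne_of_lt (key _ _ h))
  -- layer cake
  have hlayer : ∑ m ∈ Finset.Icc 1 M, ((2 ^ (m - 1) : ℕ) : ℝ≥0∞) * ((Am m).card : ℝ≥0∞)
      ≤ ∑ j ∈ Finset.Icc 1 i, localPeriod u j := by
    have hstep : ∀ m : ℕ, ((2 ^ (m - 1) : ℕ) : ℝ≥0∞) * ((Am m).card : ℝ≥0∞)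
        = ∑ j ∈ Finset.Icc 1 i,
            (if ((2 ^ m : ℕ) : ℝ≥0∞) ≤ localPeriod u j
              then ((2 ^ (m - 1) : ℕ) : ℝ≥0∞) else 0) := by
      intro m
      have e1 : ∑ _j ∈ Am m, ((2 ^ (m - 1) : ℕ) : ℝ≥0∞)
          = ((Am m).card : ℝ≥0∞) * ((2 ^ (m - 1) : ℕ) : ℝ≥0∞) := by
        rw [Finset.sum_const, nsmul_eq_mul]
      have e2 : ∑ _j ∈ Am m, ((2 ^ (m - 1) : ℕ) : ℝ≥0∞)
          = ∑ j ∈ Finset.Icc 1 i,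
              (if ((2 ^ m : ℕ) : ℝ≥0∞) ≤ localPeriod u j
                then ((2 ^ (m - 1) : ℕ) : ℝ≥0∞) else 0) := by
        rw [hAm]
        exact Finset.sum_filter _ _
      rw [← e2, e1, mul_comm]
    calc ∑ m ∈ Finset.Icc 1 M, ((2 ^ (m - 1) : ℕ) : ℝ≥0∞) * ((Am m).card : ℝ≥0∞)
        = ∑ m ∈ Finset.Icc 1 M, ∑ j ∈ Finset.Icc 1 i,
            (if ((2 ^ m : ℕ) : ℝ≥0∞) ≤ localPeriod u j
              then ((2 ^ (m - 1) : ℕ) : ℝ≥0∞) else 0) :=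
          Finset.sum_congr rfl (fun m _ => hstep m)
      _ = ∑ j ∈ Finset.Icc 1 i, ∑ m ∈ Finset.Icc 1 M,
            (if ((2 ^ m : ℕ) : ℝ≥0∞) ≤ localPeriod u j
              then ((2 ^ (m - 1) : ℕ) : ℝ≥0∞) else 0) := Finset.sum_comm
      _ ≤ ∑ j ∈ Finset.Icc 1 i, localPeriod u j := by
          apply Finset.sum_le_sum
          intro j _
          exact PCAux.layer_pointwise (localPeriod u j) M _ (fun m hm => hm)
  -- per-scale arithmetic
  have hterm : ∀ m, 1 ≤ m → m ≤ M → i ≤ 4 * ((E + 1) * (2 ^ (m - 1) * Km m)) := by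
    intro m h1m hmM
    have hd3' : 3 ≤ i / ((E + 1) * 2 ^ m) := hd3 m hmM
    have hmod : i % ((E + 1) * 2 ^ m) < (E + 1) * 2 ^ m := Nat.mod_lt _ (hlmpos m)
    have hdm : (E + 1) * 2 ^ m * (i / ((E + 1) * 2 ^ m)) + i % ((E + 1) * 2 ^ m) = i :=
      Nat.div_add_mod i _
    have hlt : i < (E + 1) * 2 ^ m * (i / ((E + 1) * 2 ^ m)) + (E + 1) * 2 ^ m := by omega
    have e1 : (E + 1) * 2 ^ m * (i / ((E + 1) * 2 ^ m)) + (E + 1) * 2 ^ m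
        = (i / ((E + 1) * 2 ^ m) + 1) * ((E + 1) * 2 ^ m) := by ring
    have e2 : (i / ((E + 1) * 2 ^ m) + 1) * ((E + 1) * 2 ^ m)
        ≤ (2 * (i / ((E + 1) * 2 ^ m) - 1)) * ((E + 1) * 2 ^ m) :=
      Nat.mul_le_mul_right _ (by omega)
    have e3 : (2 * (i / ((E + 1) * 2 ^ m) - 1)) * ((E + 1) * 2 ^ m)
        = 4 * ((E + 1) * (2 ^ (m - 1) * (i / ((E + 1) * 2 ^ m) - 1))) := by
      have h2m : (2:ℕ) ^ m = 2 ^ (m - 1) * 2 := by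
        conv_lhs => rw [show m = (m - 1) + 1 by omega]
        rw [pow_succ]
      rw [h2m]
      ring
    have hKmv : Km m = i / ((E + 1) * 2 ^ m) - 1 := by rw [hKm]
    rw [hKmv]
    omega
  -- total count in ℕ
  set N := ∑ m ∈ Finset.Icc 1 M, 2 ^ (m - 1) * Km m with hN
  have hMN : M * i ≤ 4 * (E + 1) * N := by
    have h1 : ∑ _m ∈ Finset.Icc 1 M, i
        ≤ ∑ m ∈ Finset.Icc 1 M, 4 * ((E + 1) * (2 ^ (m - 1) * Km m)) := by
      apply Finset.sum_le_sum
      intro m hm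
      rw [Finset.mem_Icc] at hm
      exact hterm m hm.1 hm.2
    rw [Finset.sum_const, Nat.card_Icc, smul_eq_mul] at h1
    simp only [Nat.add_sub_cancel] at h1
    calc M * i ≤ ∑ m ∈ Finset.Icc 1 M, 4 * ((E + 1) * (2 ^ (m - 1) * Km m)) := h1
      _ = 4 * (E + 1) * N := by
          rw [hN, Finset.mul_sum]
          exact Finset.sum_congr rfl (fun m _ => by ring)
  have hSN : ((N : ℕ) : ℝ≥0∞) ≤ ∑ j ∈ Finset.Icc 1 i, localPeriod u j := by
    refine le_trans ?_ hlayer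
    rw [hN, Nat.cast_sum]
    apply Finset.sum_le_sum
    intro m hm
    rw [Finset.mem_Icc] at hm
    rw [Nat.cast_mul]
    exact mul_le_mul_right (Nat.cast_le.mpr (hcard m hm.2)) _
  have hNge : (n + 1) * i ≤ N := by
    have h4 : 0 < 4 * (E + 1) := by omega
    apply Nat.le_of_mul_le_mul_left _ h4
    calc 4 * (E + 1) * ((n + 1) * i) = M * i := by rw [hM]; ring
      _ ≤ 4 * (E + 1) * N := hMN
  have hipos : 1 ≤ i := by
    have h5 := hlmpos M
    omega
  rw [pcomplexity, ENNReal.le_div_iff_mul_le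
    (Or.inl (show (i : ℝ≥0∞) ≠ 0 from Nat.cast_ne_zero.mpr (by omega)))
    (Or.inl (ENNReal.natCast_ne_top i))]
  calc (n : ℝ≥0∞) * (i : ℝ≥0∞) = ((n * i : ℕ) : ℝ≥0∞) := by rw [Nat.cast_mul]
    _ ≤ ((N : ℕ) : ℝ≥0∞) :=
        Nat.cast_le.mpr (le_trans (Nat.mul_le_mul_right i (by omega)) hNge)
    _ ≤ _ := hSN
end

section
/- For every function f : ℕ → ℕ there exists a uniformly recurrent infinite word u (over a two-letter alphabet {a,b}) such that h_u(d) > f(d) for infinitely many positive integers d. -/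
open scoped BigOperators ENNReal

open PeriodicityComplexity



namespace PCAux

variable (f : ℕ → ℕ)

/-- block length at level `k` -/
def q : ℕ → ℕ
  | 0 => 1
  | k + 1 => (4 * f (4 * q k) + 8) * q k

/-- pattern length between level `k` and `k+1` -/
def Qk (k : ℕ) : ℕ := 4 * f (4 * q f k) + 8

lemma q_succ (k : ℕ) : q f (k + 1) = Qk f k * q f k := rfl

lemma Qk_ge8 (k : ℕ) : 8 ≤ Qk f k := by unfold Qk; omega

lemma q_pos (k : ℕ) : 0 < q f k := by
  induction k with
  | zero => simp [q]
  | succ k ih =>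
    rw [q_succ]
    have := Qk_ge8 f k
    positivity

lemma q_mono (k : ℕ) : q f k ≤ q f (k + 1) := by
  rw [q_succ]
  have h8 := Qk_ge8 f k
  nlinarith [q_pos f k]

lemma le_q (k : ℕ) : k ≤ q f k := by
  induction k with
  | zero => simp
  | succ k ih =>
    rw [q_succ]
    have h8 := Qk_ge8 f k
    have := q_pos f k
    nlinarith

lemma q_dvd {m k : ℕ} (h : m ≤ k) : q f m ∣ q f k := by
  induction k with
  | zero => simpa [Nat.le_zero.mp h]
  | succ k ih =>
    rcases Nat.lt_or_ge m (k+1) with h' | h'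
    · exact (ih (by omega)).trans ⟨Qk f k, by rw [q_succ]; ring⟩
    · have : m = k + 1 := by omega
      subst this; rfl

def base : Bool → List Bool
  | true => [true, true, false, true, false, false]
  | false => [true, true, false, false, true, false]

def Pat (k : ℕ) (x : Bool) : List Bool := base x ++ List.replicate (Qk f k - 6) false

lemma base_length (x : Bool) : (base x).length = 6 := by cases x <;> rfl

lemma Pat_length (k : ℕ) (x : Bool) : (Pat f k x).length = Qk f k := by
  have := Qk_ge8 f k
  simp [Pat, base_length]; omega

lemma replicate_getD (n i : ℕ) : (List.replicate n (false : Bool)).getD i false = false := by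
  rcases Nat.lt_or_ge i n with h | h
  · rw [List.getD_eq_getElem _ _ (by simpa)]; simp
  · rw [List.getD_eq_default]; simp [h]

lemma pat_lt6 (k : ℕ) (x : Bool) {i : ℕ} (h : i < 6) :
    (Pat f k x).getD i false = (base x).getD i false := by
  rw [Pat, List.getD_append _ _ _ _ (by rw [base_length]; omega)]

lemma pat_ge6 (k : ℕ) (x : Bool) {i : ℕ} (h : 6 ≤ i) :
    (Pat f k x).getD i false = false := by
  rw [Pat, List.getD_append_right _ _ _ _ (by rw [base_length]; omega)]
  exact replicate_getD _ _

lemma pat0 (k : ℕ) (x : Bool) : (Pat f k x).getD 0 false = true := by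
  rw [pat_lt6 f k x (by omega)]; cases x <;> rfl

lemma pat1 (k : ℕ) (x : Bool) : (Pat f k x).getD 1 false = true := by
  rw [pat_lt6 f k x (by omega)]; cases x <;> rfl

lemma pat3 (k : ℕ) (x : Bool) : (Pat f k x).getD 3 false = x := by
  rw [pat_lt6 f k x (by omega)]; cases x <;> rfl

lemma pat_last (k : ℕ) : ∀ x, (Pat f k x).getD (Qk f k - 1) false = false := by
  intro x; exact pat_ge6 f k x (by have := Qk_ge8 f k; omega)

lemma base11 (x : Bool) (b : ℕ) (hb : b < 5) (h1 : (base x).getD b false = true)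
    (h2 : (base x).getD (b + 1) false = true) : b = 0 := by
  interval_cases b <;> revert h1 h2 <;> cases x <;> decide

/-- no "11" inside a pattern except at position 0 -/
lemma pat11 (k : ℕ) (x : Bool) {b : ℕ}
    (h1 : (Pat f k x).getD b false = true)
    (h2 : (Pat f k x).getD (b + 1) false = true) : b = 0 := by
  rcases Nat.lt_or_ge b 5 with h | h
  · rw [pat_lt6 f k x (by omega)] at h1
    rw [pat_lt6 f k x (by omega)] at h2
    exact base11 x b h h1 h2
  · rcases Nat.lt_or_ge b 6 with h' | h'
    · have hb5 : b = 5 := by omega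
      subst hb5
      rw [pat_lt6 f k x (by omega)] at h1
      cases x <;> simp [base] at h1
    · rw [pat_ge6 f k x h'] at h1
      simp at h1

/-- the level-`m` letter sequence -/
def letterAt (m s : ℕ) : Bool :=
  if h : s = 0 then true
  else (Pat f m (letterAt (m + 1) (s / Qk f m))).getD (s % Qk f m) false
termination_by (s, 0)
decreasing_by
  refine Prod.Lex.left _ _ ?_
  exact Nat.div_lt_self (Nat.pos_of_ne_zero h) (by have := Qk_ge8 f m; omega)

lemma letterAt_zero (m : ℕ) : letterAt f m 0 = true := by rw [letterAt]; simp

lemma letterAt_eq (m s : ℕ) :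
    letterAt f m s = (Pat f m (letterAt f (m + 1) (s / Qk f m))).getD (s % Qk f m) false := by
  rcases Nat.eq_zero_or_pos s with rfl | hs
  · rw [letterAt_zero, Nat.zero_div, Nat.zero_mod, pat0]
  · rw [letterAt, dif_neg (by omega)]

lemma letterAt_mul (m c b : ℕ) (hb : b < Qk f m) :
    letterAt f m (c * Qk f m + b) = (Pat f m (letterAt f (m + 1) c)).getD b false := by
  rw [letterAt_eq]
  have hq : 0 < Qk f m := by have := Qk_ge8 f m; omega
  rw [show c * Qk f m + b = Qk f m * c + b by ring, Nat.mul_add_div hq, Nat.mul_add_mod,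
    Nat.div_eq_of_lt hb, Nat.mod_eq_of_lt hb]
  simp


lemma letterAt_small (m n : ℕ) (hn : n < Qk f m) :
    letterAt f m n = (Pat f m true).getD n false := by
  have := letterAt_mul f m 0 n hn
  simpa [letterAt_zero] using this

/-- level-`m` blocks -/
def Blk : ℕ → Bool → List Bool
  | 0, x => [x]
  | m + 1, x => ((Pat f m x).map (Blk m)).flatten

lemma Blk_length (m : ℕ) (x : Bool) : (Blk f m x).length = q f m := by
  induction m generalizing x with
  | zero => rfl
  | succ m ih =>
    rw [Blk, List.length_flatten, List.map_map]
    have : (List.map (List.length ∘ Blk f m) (Pat f m x)) =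
        List.replicate (Qk f m) (q f m) := by
      rw [← Pat_length f m x]
      apply List.map_eq_replicate_iff.mpr
      intro b _
      exact ih b
    rw [this, List.sum_replicate, smul_eq_mul, q_succ]

lemma flatten_getD (g : Bool → List Bool) (qq : ℕ) (hg : ∀ b, (g b).length = qq)
    (P : List Bool) (j t : ℕ) (hj : j < P.length) (ht : t < qq) :
    ((P.map g).flatten).getD (j * qq + t) false = (g (P.getD j false)).getD t false := by
  induction P generalizing j with
  | nil => simp at hj
  | cons hd tl ih =>
    rcases Nat.eq_zero_or_pos j with rfl | hjpos
    · simp only [List.map_cons, List.flatten_cons, Nat.zero_mul, Nat.zero_add]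
      rw [List.getD_append _ _ _ _ (by rw [hg]; omega)]
      rfl
    · obtain ⟨j', rfl⟩ : ∃ j', j = j' + 1 := ⟨j - 1, by omega⟩
      simp only [List.map_cons, List.flatten_cons]
      rw [List.getD_append_right _ _ _ _ (by rw [hg]; nlinarith)]
      have harith : (j' + 1) * qq + t - (g hd).length = j' * qq + t := by
        rw [hg]; ring_nf; omega
      rw [harith, ih j' (by simpa using hj), List.getD_cons_succ]

/-- the infinite word -/
def ww : ℕ → Bool := letterAt f 0

lemma blockSpell (m : ℕ) : ∀ s t, t < q f m →
    ww f (s * q f m + t) = (Blk f m (letterAt f m s)).getD t false := by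
  induction m with
  | zero =>
    intro s t ht
    have ht0 : t = 0 := by simp [q] at ht; omega
    subst ht0
    simp [Blk, ww, q]
  | succ m ih =>
    intro s t ht
    have hqm := q_pos f m
    set j := t / q f m with hj
    set t' := t % q f m with ht'
    have hjQ : j < Qk f m := by
      rw [hj]
      have : t < Qk f m * q f m := by rw [← q_succ]; exact ht
      exact Nat.div_lt_of_lt_mul (by rw [mul_comm]; exact this)
    have ht'q : t' < q f m := Nat.mod_lt _ hqm
    have hdm := Nat.div_add_mod t (q f m)
    have hidx : s * q f (m + 1) + t = (s * Qk f m + j) * q f m + t' := by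
      have h2 : (s * Qk f m + j) * q f m + t' = s * (Qk f m * q f m) + (q f m * j + t') := by
        rw [hj, ht']; ring
      rw [q_succ, h2, hj, ht', hdm]
    rw [hidx, ih _ _ ht'q]
    have hlet : letterAt f m (s * Qk f m + j) =
        (Pat f m (letterAt f (m + 1) s)).getD j false := by
      rw [letterAt_eq]
      have hq : 0 < Qk f m := by have := Qk_ge8 f m; omega
      rw [show s * Qk f m + j = Qk f m * s + j by ring, Nat.mul_add_div hq, Nat.mul_add_mod,
        Nat.div_eq_of_lt hjQ, Nat.mod_eq_of_lt hjQ]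
      simp
    rw [hlet, Blk]
    rw [show (m + 1) = m + 1 from rfl]
    have := flatten_getD (Blk f m) (q f m) (fun b => Blk_length f m b)
      (Pat f m (letterAt f (m+1) s)) j t' (by rw [Pat_length]; exact hjQ) ht'q
    rw [show j * q f m + t' = t by rw [hj, ht', mul_comm]; exact hdm] at this
    rw [this]


lemma distInj (m : ℕ) : ∃ t, t < q f m ∧
    (Blk f m true).getD t false ≠ (Blk f m false).getD t false := by
  induction m with
  | zero => exact ⟨0, by simp [q], by simp [Blk]⟩
  | succ m ih =>
    obtain ⟨t, ht, hd⟩ := ih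
    refine ⟨3 * q f m + t, ?_, ?_⟩
    · have h8 := Qk_ge8 f m
      have hq := q_pos f m
      rw [q_succ]; nlinarith
    · have hval : ∀ x : Bool, (Blk f (m+1) x).getD (3 * q f m + t) false
          = (Blk f m ((Pat f m x).getD 3 false)).getD t false := by
        intro x
        rw [Blk]
        exact flatten_getD (Blk f m) (q f m) (fun b => Blk_length f m b) _ 3 t
          (by rw [Pat_length]; have := Qk_ge8 f m; omega) ht
      rw [hval, hval, pat3, pat3]
      exact hd

lemma shiftLetters (m a b : ℕ)
    (h : ∀ t, t < q f m → ww f (a * q f m + t) = ww f (b * q f m + t)) :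
    letterAt f m a = letterAt f m b := by
  by_contra hne
  obtain ⟨t, ht, hd⟩ := distInj f m
  have h1 := blockSpell f m a t ht
  have h2 := blockSpell f m b t ht
  have h3 := h t ht
  rw [h1, h2] at h3
  rcases Bool.eq_false_or_eq_true (letterAt f m a) with ha | ha <;>
    rcases Bool.eq_false_or_eq_true (letterAt f m b) with hb | hb <;>
      rw [ha, hb] at h3 hne <;> simp at hne <;> exact hd (by rw [h3] <;> try rw [← h3]) <;> skip
  all_goals exact hd h3.symm

/-- markers "11" in the level-`m` sequence occur only at multiples of `Qk f m` -/
lemma marker (m s : ℕ) (h1 : letterAt f m s = true) (h2 : letterAt f m (s + 1) = true) :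
    Qk f m ∣ s := by
  have h8 := Qk_ge8 f m
  have hQ : 0 < Qk f m := by omega
  set b := s % Qk f m with hb
  have hblt : b < Qk f m := Nat.mod_lt _ hQ
  by_cases hlast : b = Qk f m - 1
  · rw [letterAt_eq, ← hb, hlast, pat_last] at h1
    simp at h1
  · have hb1 : (s + 1) % Qk f m = b + 1 := by
      have h1p : (1 : ℕ) % Qk f m = 1 := Nat.mod_eq_of_lt (by omega)
      rw [Nat.add_mod, h1p, ← hb]
      exact Nat.mod_eq_of_lt (by omega)
    have hd1 : (s + 1) / Qk f m = s / Qk f m := by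
      have h0 := Nat.div_add_mod s (Qk f m)
      have h1' := Nat.div_add_mod (s + 1) (Qk f m)
      rw [hb1] at h1'
      rw [← hb] at h0
      by_contra hne
      have hlt : s / Qk f m < (s+1) / Qk f m ∨ (s+1) / Qk f m < s / Qk f m := by
        omega
      rcases hlt with hlt | hlt <;> nlinarith
    rw [letterAt_eq, ← hb] at h1
    rw [letterAt_eq, hb1, hd1] at h2
    have := pat11 f m (letterAt f (m+1) (s / Qk f m)) h1 h2
    exact Nat.dvd_of_mod_eq_zero (by omega)

lemma two_block (k a u : ℕ) (hu : u < 2 * q f k) :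
    ww f (a * q f k + u) =
      ((Blk f k (letterAt f k a)) ++ (Blk f k (letterAt f k (a + 1)))).getD u false := by
  rcases Nat.lt_or_ge u (q f k) with h | h
  · rw [List.getD_append _ _ _ _ (by rw [Blk_length]; exact h)]
    exact blockSpell f k a u h
  · obtain ⟨u', rfl⟩ : ∃ u', u = q f k + u' := ⟨u - q f k, by omega⟩
    rw [List.getD_append_right _ _ _ _ (by rw [Blk_length]; omega)]
    rw [Blk_length, show q f k + u' - q f k = u' by omega]
    rw [show a * q f k + (q f k + u') = (a + 1) * q f k + u' by ring]
    exact blockSpell f k (a+1) u' (by omega)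

/-- Condition (A): no centered square at position `4 * q f k`. -/
lemma AA (k l : ℕ) (hl1 : 1 ≤ l) (hl4 : l ≤ 4 * q f k)
    (H : ∀ t, t < l → ww f (4 * q f k - l + t) = ww f (4 * q f k + t)) : False := by
  have hqk := q_pos f k
  have key : ∀ m, m ≤ k → q f m ∣ l := by
    intro m
    induction m with
    | zero => intro _; simp [q]
    | succ m ihm =>
      intro hmk
      have hqm := q_pos f m
      have h8 := Qk_ge8 f m
      obtain ⟨Λ, hΛ⟩ := ihm (by omega)
      obtain ⟨c, hc⟩ := q_dvd f (show m ≤ k by omega)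
      have hΛpos : 1 ≤ Λ := by
        rcases Nat.eq_zero_or_pos Λ with rfl | h
        · simp at hΛ; omega
        · omega
      have hcpos : 1 ≤ c := by
        rcases Nat.eq_zero_or_pos c with rfl | h
        · simp at hc; omega
        · omega
      have hΛle : Λ ≤ 4 * c := by
        have h1 : q f m * Λ ≤ q f m * (4 * c) := by
          have : 4 * q f k = q f m * (4 * c) := by rw [hc]; ring
          omega
        exact Nat.le_of_mul_le_mul_left h1 hqm
      have letEq : ∀ j, j < Λ → letterAt f m (4 * c - Λ + j) = letterAt f m (4 * c + j) := by
        intro j hj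
        apply shiftLetters
        intro t' ht'
        have hu : j * q f m + t' < l := by
          have h1 : (j + 1) * q f m ≤ Λ * q f m := Nat.mul_le_mul_right _ (by omega)
          have h2 : (j + 1) * q f m = j * q f m + q f m := by ring
          have h3 : Λ * q f m = q f m * Λ := by ring
          omega
        have hidx1 : (4 * c - Λ + j) * q f m + t' = (4 * q f k - l) + (j * q f m + t') := by
          have e2 : q f m * (4 * c - Λ) + l = 4 * q f k := by
            have e1 : (4 * c - Λ) + Λ = 4 * c := by omega
            rw [hΛ, hc, ← Nat.mul_add, e1]; ring
          have e3 : (4 * c - Λ + j) * q f m = q f m * (4 * c - Λ) + j * q f m := by ring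
          omega
        have hidx2 : (4 * c + j) * q f m + t' = 4 * q f k + (j * q f m + t') := by
          have e4 : (4 * c + j) * q f m = 4 * q f k + j * q f m := by rw [hc]; ring
          omega
        rw [hidx1, hidx2]
        exact H _ hu
      obtain ⟨c₂, hc₂⟩ := q_dvd f (show m + 1 ≤ k by omega)
      have hc4 : c = Qk f m * c₂ := by
        have h1 : q f m * c = q f m * (Qk f m * c₂) := by
          rw [← hc, hc₂, q_succ]; ring
        exact Nat.eq_of_mul_eq_mul_left hqm h1
      have hc₂pos : 1 ≤ c₂ := by
        rcases Nat.eq_zero_or_pos c₂ with rfl | h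
        · rw [Nat.mul_zero] at hc4; omega
        · omega
      have hR0 : letterAt f m (4 * c) = true := by
        have h := letterAt_mul f m (4 * c₂) 0 (by omega)
        rw [Nat.add_zero] at h
        rw [show 4 * c = 4 * c₂ * Qk f m by rw [hc4]; ring, h, pat0]
      by_cases hΛ1 : Λ = 1
      · exfalso
        have h := letEq 0 (by omega)
        rw [Nat.add_zero, Nat.add_zero, hΛ1] at h
        have hL : letterAt f m (4 * c - 1) = false := by
          set D := 4 * c₂ - 1 with hD
          have h3 : 4 * c = D * Qk f m + Qk f m := by
            have h4 : D + 1 = 4 * c₂ := by omega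
            have h5 : (D + 1) * Qk f m = D * Qk f m + Qk f m := by ring
            rw [show 4 * c = 4 * c₂ * Qk f m by rw [hc4]; ring, ← h4, h5]
          rw [show 4 * c - 1 = D * Qk f m + (Qk f m - 1) by omega,
            letterAt_mul f m _ _ (by omega), pat_last]
        rw [hL, hR0] at h
        exact absurd h (by simp)
      · have hR1 : letterAt f m (4 * c + 1) = true := by
          have h := letterAt_mul f m (4 * c₂) 1 (by omega)
          rw [show 4 * c + 1 = 4 * c₂ * Qk f m + 1 by rw [hc4]; ring, h, pat1]
        have h0 := letEq 0 (by omega)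
        rw [Nat.add_zero, Nat.add_zero, hR0] at h0
        have h1 := letEq 1 (by omega)
        rw [hR1] at h1
        have hmk := marker f m (4 * c - Λ) h0 h1
        have hdvdΛ : Qk f m ∣ Λ := by
          have d1 : Qk f m ∣ 4 * c := ⟨4 * c₂, by rw [hc4]; ring⟩
          have d2 := Nat.dvd_sub d1 hmk
          rwa [show 4 * c - (4 * c - Λ) = Λ by omega] at d2
        obtain ⟨Λ', hΛ'⟩ := hdvdΛ
        exact ⟨Λ', by rw [hΛ, hΛ', q_succ]; ring⟩
  obtain ⟨Λ, hΛ⟩ := key k le_rfl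
  have h8 := Qk_ge8 f k
  have hΛpos : 1 ≤ Λ := by
    rcases Nat.eq_zero_or_pos Λ with rfl | h
    · simp at hΛ; omega
    · omega
  have hΛle : Λ ≤ 4 := by
    have h1 : q f k * Λ ≤ q f k * 4 := by omega
    exact Nat.le_of_mul_le_mul_left h1 hqk
  have letEq : ∀ j, j < Λ → letterAt f k (4 - Λ + j) = letterAt f k (4 + j) := by
    intro j hj
    apply shiftLetters
    intro t' ht'
    have hu : j * q f k + t' < l := by
      have h1 : (j + 1) * q f k ≤ Λ * q f k := Nat.mul_le_mul_right _ (by omega)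
      have h2 : (j + 1) * q f k = j * q f k + q f k := by ring
      have h3 : Λ * q f k = q f k * Λ := by ring
      omega
    have hidx1 : (4 - Λ + j) * q f k + t' = (4 * q f k - l) + (j * q f k + t') := by
      have e2 : q f k * (4 - Λ) + l = 4 * q f k := by
        have e1 : (4 - Λ) + Λ = 4 := by omega
        rw [hΛ, ← Nat.mul_add, e1]; ring
      have e3 : (4 - Λ + j) * q f k = q f k * (4 - Λ) + j * q f k := by ring
      omega
    have hidx2 : (4 + j) * q f k + t' = 4 * q f k + (j * q f k + t') := by
      have e4 : (4 + j) * q f k = 4 * q f k + j * q f k := by ring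
      omega
    rw [hidx1, hidx2]
    exact H _ hu
  have h := letEq (Λ - 1) (by omega)
  rw [show 4 - Λ + (Λ - 1) = 3 by omega, show 4 + (Λ - 1) = 3 + Λ by omega] at h
  have hL3 : letterAt f k 3 = true := by
    rw [letterAt_small f k 3 (by omega), pat3]
  have hR : letterAt f k (3 + Λ) = false := by
    rw [letterAt_small f k (3 + Λ) (by omega)]
    interval_cases Λ
    · rw [pat_lt6 f k true (by omega)]; decide
    · rw [pat_lt6 f k true (by omega)]; decide
    · exact pat_ge6 f k true (by omega)
    · exact pat_ge6 f k true (by omega)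
  rw [hL3, hR] at h
  exact absurd h (by simp)

/-- Marker synchronization: an occurrence of the first `2 * q f k` letters is aligned. -/
lemma MS (k : ℕ) : ∀ t, (∀ u, u < 2 * q f k → ww f (t + u) = ww f u) → q f k ∣ t := by
  induction k with
  | zero => intro t _; simp [q]
  | succ k ih =>
    intro t H
    have hqk := q_pos f k
    have h8 := Qk_ge8 f k
    have h2q : 2 * q f k ≤ 2 * q f (k + 1) := by have := q_mono f k; omega
    obtain ⟨s, hs⟩ := ih t (fun u hu => H u (by omega))
    have letEq : ∀ j, j < 2 * Qk f k → letterAt f k (s + j) = letterAt f k j := by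
      intro j hj
      apply shiftLetters
      intro t' ht'
      have e1 : (s + j) * q f k = t + j * q f k := by rw [hs]; ring
      have hu : j * q f k + t' < 2 * q f (k + 1) := by
        have h1 : (j + 1) * q f k ≤ 2 * Qk f k * q f k := Nat.mul_le_mul_right _ (by omega)
        have e : 2 * q f (k + 1) = 2 * Qk f k * q f k := by rw [q_succ]; ring
        have e2 : (j + 1) * q f k = j * q f k + q f k := by ring
        omega
      rw [show (s + j) * q f k + t' = t + (j * q f k + t') by omega]
      exact H _ hu
    have hQ0 : letterAt f k (Qk f k) = true := by
      have h := letterAt_mul f k 1 0 (by omega)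
      rw [Nat.add_zero, one_mul] at h
      rw [h, pat0]
    have hQ1 : letterAt f k (Qk f k + 1) = true := by
      have h := letterAt_mul f k 1 1 (by omega)
      rw [one_mul] at h
      rw [h, pat1]
    have e0 := letEq (Qk f k) (by omega)
    rw [hQ0] at e0
    have e1 := letEq (Qk f k + 1) (by omega)
    rw [hQ1] at e1
    have hmk := marker f k (s + Qk f k) e0
      (by rw [show s + Qk f k + 1 = s + (Qk f k + 1) by ring]; exact e1)
    have hdvds : Qk f k ∣ s := by
      rw [Nat.add_comm] at hmk
      exact (Nat.dvd_add_right ⟨1, by ring⟩).mp hmk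
    obtain ⟨s', hs'⟩ := hdvds
    exact ⟨s', by rw [hs, hs', q_succ]; ring⟩

/-- Condition (B): the prefix of length `4 * q f k` does not reoccur before `q f (k+1)`. -/
lemma BB (k l : ℕ) (h4 : 4 * q f k ≤ l) (hlt : l < q f (k + 1))
    (H : ∀ t, t < 4 * q f k → ww f (l + t) = ww f t) : False := by
  have hqk := q_pos f k
  have h8 := Qk_ge8 f k
  obtain ⟨s, hs⟩ := MS f k l (fun u hu => H u (by omega))
  have hs4 : 4 ≤ s := by
    have h1 : q f k * 4 ≤ q f k * s := by omega
    exact Nat.le_of_mul_le_mul_left h1 hqk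
  have hsQ : s < Qk f k := by
    have h1 : q f k * s < q f k * Qk f k := by
      have : q f (k + 1) = q f k * Qk f k := by rw [q_succ]; ring
      omega
    exact Nat.lt_of_mul_lt_mul_left h1
  have letEq : ∀ j, j < 4 → letterAt f k (s + j) = letterAt f k j := by
    intro j hj
    apply shiftLetters
    intro t' ht'
    have e1 : (s + j) * q f k = l + j * q f k := by rw [hs]; ring
    have hu : j * q f k + t' < 4 * q f k := by
      have h1 : (j + 1) * q f k ≤ 4 * q f k := Nat.mul_le_mul_right _ (by omega)
      have e2 : (j + 1) * q f k = j * q f k + q f k := by ring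
      omega
    rw [show (s + j) * q f k + t' = l + (j * q f k + t') by omega]
    exact H _ hu
  have l1 : letterAt f k 1 = true := by
    rw [letterAt_small f k 1 (by omega), pat1]
  have e0 := letEq 0 (by omega)
  rw [Nat.add_zero, letterAt_zero] at e0
  have e1 := letEq 1 (by omega)
  rw [l1] at e1
  have hmk := marker f k s e0 e1
  have := Nat.eq_zero_of_dvd_of_lt hmk hsQ
  omega

open PeriodicityComplexity in
lemma occursAt_getD {w : ℕ → Bool} {z : List Bool} {j : ℕ} (h : OccursAt w z j) :
    ∀ i, i < z.length → z.getD i false = w (j + i) := by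
  intro i hi
  have h2 := congrArg (fun l => List.getD l i false) h
  rw [h2, List.getD_eq_getElem _ _ (by simpa using hi), List.getElem_ofFn]

open PeriodicityComplexity in
lemma occursAt_of_getD {w : ℕ → Bool} {z : List Bool} {j : ℕ}
    (h : ∀ i, i < z.length → z.getD i false = w (j + i)) : OccursAt w z j := by
  apply List.ext_getElem (by simp)
  intro i hi hi2
  rw [List.getElem_ofFn, ← List.getD_eq_getElem z false hi, h i hi]

/-- every two-letter word over the letter alphabet occurs in every pattern at an
    explicit small position -/
lemma pairIn (k : ℕ) (x' y' xx : Bool) :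
    ∃ b, b + 1 ≤ 6 ∧ (Pat f k xx).getD b false = x' ∧
      (Pat f k xx).getD (b + 1) false = y' := by
  have h6 : ∀ i, i < 6 → (Pat f k xx).getD i false = (base xx).getD i false :=
    fun i hi => pat_lt6 f k xx hi
  cases x' <;> cases y' <;> cases xx
  · exact ⟨2, by omega, by rw [h6 2 (by omega)]; decide, by rw [h6 3 (by omega)]; decide⟩
  · exact ⟨4, by omega, by rw [h6 4 (by omega)]; decide, by rw [h6 5 (by omega)]; decide⟩
  · exact ⟨3, by omega, by rw [h6 3 (by omega)]; decide, by rw [h6 4 (by omega)]; decide⟩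
  · exact ⟨2, by omega, by rw [h6 2 (by omega)]; decide, by rw [h6 3 (by omega)]; decide⟩
  · exact ⟨1, by omega, by rw [h6 1 (by omega)]; decide, by rw [h6 2 (by omega)]; decide⟩
  · exact ⟨1, by omega, by rw [h6 1 (by omega)]; decide, by rw [h6 2 (by omega)]; decide⟩
  · exact ⟨0, by omega, by rw [h6 0 (by omega)]; decide, by rw [h6 1 (by omega)]; decide⟩
  · exact ⟨0, by omega, by rw [h6 0 (by omega)]; decide, by rw [h6 1 (by omega)]; decide⟩

open PeriodicityComplexity in
lemma ur : UniformlyRecurrent (ww f) := by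
  intro z hzf
  obtain ⟨j₀, hocc⟩ := hzf
  set n := z.length with hn
  set k := n with hk
  have hnq : n ≤ q f k := le_q f n
  have hqk := q_pos f k
  have h8 := Qk_ge8 f k
  set a := j₀ / q f k with ha
  set e := j₀ % q f k with he
  have helt : e < q f k := Nat.mod_lt _ hqk
  have hj₀ : j₀ = a * q f k + e := by rw [ha, he, mul_comm]; exact (Nat.div_add_mod _ _).symm
  set x := letterAt f k a with hx
  set y := letterAt f k (a + 1) with hy
  have hz : ∀ i, i < n → z.getD i false = ww f (j₀ + i) := occursAt_getD hocc
  set M := q f (k + 1) with hM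
  have hM8 : 8 * q f k ≤ M := by
    rw [hM, q_succ]
    exact Nat.mul_le_mul_right _ (by omega)
  have hMpos : 0 < M := by have := q_pos f (k+1); omega
  refine ⟨2 * M, ?_⟩
  intro j
  set c := j / M + 1 with hc
  obtain ⟨b, hb6, hbx, hby⟩ := pairIn f k x y (letterAt f (k + 1) c)
  set p := c * Qk f k + b with hp
  have hpx : letterAt f k p = x := by rw [hp, letterAt_mul f k c b (by omega), hbx]
  have hpy : letterAt f k (p + 1) = y := by
    rw [hp, show c * Qk f k + b + 1 = c * Qk f k + (b + 1) by ring,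
      letterAt_mul f k c (b + 1) (by omega), hby]
  set t := p * q f k + e with ht
  have hocc2 : OccursAt (ww f) z t := by
    apply occursAt_of_getD
    intro i hi
    rw [hz i hi]
    have hei : e + i < 2 * q f k := by omega
    have h1 : ww f (j₀ + i) = (Blk f k x ++ Blk f k y).getD (e + i) false := by
      rw [hj₀, show a * q f k + e + i = a * q f k + (e + i) by ring]
      exact two_block f k a (e + i) hei
    have h2 : ww f (t + i) = (Blk f k x ++ Blk f k y).getD (e + i) false := by
      rw [ht, show p * q f k + e + i = p * q f k + (e + i) by ring]
      have h3 := two_block f k p (e + i) hei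
      rw [hpx, hpy] at h3
      exact h3
    rw [h1, h2]
  have hdm := Nat.div_add_mod j M
  have hjm : j % M < M := Nat.mod_lt _ hMpos
  have hcM : c * M = M * (j / M) + M := by rw [hc]; ring
  have hpq : p * q f k = c * M + b * q f k := by rw [hp, hM, q_succ]; ring
  have hb5 : b * q f k ≤ 5 * q f k := Nat.mul_le_mul_right _ (by omega)
  refine ⟨t, by omega, by omega, hocc2⟩

end PCAux

/-- For every `f : ℕ → ℕ` there is a uniformly recurrent infinite word `u`
over a two-letter alphabet with `h_u(d) > f(d)` for infinitely many positive integers `d`. -/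
theorem exists_uniformlyRecurrent_pcomplexity_gt
    (f : ℕ → ℕ) :
    ∃ u : ℕ → Bool, UniformlyRecurrent u ∧
      ∀ N : ℕ, ∃ d : ℕ, N ≤ d ∧ 1 ≤ d ∧ (f d : ℝ≥0∞) < pcomplexity u d := by
  refine ⟨PCAux.ww f, PCAux.ur f, ?_⟩
  intro N
  set d := 4 * PCAux.q f N with hd
  have hqN := PCAux.q_pos f N
  have hNq := PCAux.le_q f N
  refine ⟨d, by omega, by omega, ?_⟩
  have hrep : ∀ r : List Bool, IsRepWordAt (PCAux.ww f) d r → PCAux.q f (N + 1) ≤ r.length := by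
    rintro r ⟨hne, hcmp, hocc⟩
    have hrlen : 0 < r.length := List.length_pos_iff.mpr hne
    have hr : ∀ i, i < r.length → r.getD i false = PCAux.ww f (d + i) :=
      PCAux.occursAt_getD hocc
    rcases hcmp with ⟨s, hs⟩ | ⟨s, hs⟩
    · exfalso
      have hlen : s.length + r.length = d := by
        have h1 := congrArg List.length hs
        simpa [wordPrefix] using h1
      have hpre : ∀ i, i < r.length → r.getD i false = PCAux.ww f (s.length + i) := by
        intro i hi
        have h1 : (s ++ r).getD (s.length + i) false = r.getD i false := by
          rw [List.getD_append_right _ _ _ _ (by omega),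
            show s.length + i - s.length = i by omega]
        rw [← h1, hs, wordPrefix,
          List.getD_eq_getElem _ _ (by simpa using by omega : s.length + i < (List.ofFn fun t : Fin d => PCAux.ww f ↑t).length),
          List.getElem_ofFn]
      apply PCAux.AA f N r.length hrlen (by omega)
      intro t htl
      rw [show 4 * PCAux.q f N - r.length + t = s.length + t by omega]
      have e1 := hpre t htl
      have e2 := hr t htl
      rw [e1] at e2
      rw [e2, hd]
    · by_contra hcon
      push_neg at hcon
      have hlen : s.length + d = r.length := by
        have h1 := congrArg List.length hs
        simpa [wordPrefix] using h1
      apply PCAux.BB f N r.length (by omega) (by omega)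
      intro t htl
      have h1 : r.getD (s.length + t) false = PCAux.ww f t := by
        rw [← hs, List.getD_append_right _ _ _ _ (by omega),
          show s.length + t - s.length = t by omega, wordPrefix,
          List.getD_eq_getElem _ _ (by simpa using by omega : t < (List.ofFn fun u : Fin d => PCAux.ww f ↑u).length),
          List.getElem_ofFn]
      have h2 : r.getD (s.length + t) false = PCAux.ww f (d + (s.length + t)) :=
        hr _ (by omega)
      rw [show d + (s.length + t) = r.length + t by omega] at h2
      rw [← h2, h1]
  have hlp : (PCAux.q f (N + 1) : ℝ≥0∞) ≤ localPeriod (PCAux.ww f) d := by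
    apply le_sInf
    rintro a ⟨r, hrmem, rfl⟩
    show (PCAux.q f (N + 1) : ℝ≥0∞) ≤ (r.length : ℝ≥0∞)
    exact_mod_cast hrep r hrmem
  have hsum : localPeriod (PCAux.ww f) d ≤ ∑ j ∈ Finset.Icc 1 d, localPeriod (PCAux.ww f) j :=
    Finset.single_le_sum (fun i _ => zero_le) (Finset.mem_Icc.mpr ⟨by omega, le_rfl⟩)
  have hd0 : (d : ℝ≥0∞) ≠ 0 := by
    exact_mod_cast Nat.cast_ne_zero.mpr (show d ≠ 0 by rw [hd]; omega)
  have hdt : (d : ℝ≥0∞) ≠ ⊤ := ENNReal.natCast_ne_top _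
  have hmul : ((f d : ℝ≥0∞) + 1) * (d : ℝ≥0∞) ≤ (PCAux.q f (N + 1) : ℝ≥0∞) := by
    have hnat : (f d + 1) * d ≤ PCAux.q f (N + 1) := by
      rw [PCAux.q_succ, PCAux.Qk, hd]
      nlinarith [hqN]
    calc ((f d : ℝ≥0∞) + 1) * (d : ℝ≥0∞) = (((f d + 1) * d : ℕ) : ℝ≥0∞) := by push_cast; ring
      _ ≤ _ := by exact_mod_cast hnat
  have hdiv : (f d : ℝ≥0∞) + 1 ≤ (PCAux.q f (N + 1) : ℝ≥0∞) / (d : ℝ≥0∞) :=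
    (ENNReal.le_div_iff_mul_le (Or.inl hd0) (Or.inl hdt)).mpr hmul
  have hfin : (f d : ℝ≥0∞) < (f d : ℝ≥0∞) + 1 :=
    ENNReal.lt_add_right (ENNReal.natCast_ne_top _) one_ne_zero
  have hcomp : (PCAux.q f (N + 1) : ℝ≥0∞) / (d : ℝ≥0∞) ≤ pcomplexity (PCAux.ww f) d := by
    rw [pcomplexity]
    exact ENNReal.div_le_div_right (hlp.trans hsum) _
  exact lt_of_lt_of_le hfin (le_trans hdiv hcomp)
end

section
/- Let u be an infinite non-periodic uniformly recurrent word and let v be a nonempty factor of u. Then the set of integers e such that v^e is a factor of u is finite. -/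
open scoped BigOperators ENNReal

open PeriodicityComplexity

lemma occursAt_getElem {A : Type*} {w : ℕ → A} {z : List A} {j : ℕ} (h : OccursAt w z j)
    {s : ℕ} (hs : s < z.length) : z[s] = w (j + s) := by
  have h1 : z[s]? = some (w (j + s)) := by
    conv_lhs => rw [h]
    simp [List.getElem?_ofFn, List.ofFnNthVal, hs]
  rwa [List.getElem?_eq_getElem hs, Option.some_inj] at h1

lemma occursAt_of_forall {A : Type*} {w : ℕ → A} {z : List A} {j : ℕ}
    (h : ∀ s (hs : s < z.length), z[s] = w (j + s)) : OccursAt w z j := by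
  unfold OccursAt
  apply List.ext_getElem (by simp)
  intro i h1 h2
  simp [List.getElem_ofFn, h i h1]

lemma wpow_succ' {A : Type*} (v : List A) (e : ℕ) : wpow v (e + 1) = v ++ wpow v e := by
  simp [wpow, List.replicate_succ]

lemma wpow_length {A : Type*} (v : List A) (e : ℕ) :
    (wpow v e).length = e * v.length := by
  induction e with
  | zero => simp [wpow]
  | succ e ih => simp [wpow_succ', ih, Nat.succ_mul]; ring

lemma wpow_get? {A : Type*} {v : List A} (hv : v ≠ []) (e m : ℕ)
    (hm : m < e * v.length) : (wpow v e)[m]? = v[m % v.length]? := by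
  have hp : 0 < v.length := List.length_pos_iff.mpr hv
  induction e generalizing m with
  | zero => omega
  | succ e ih =>
    rw [wpow_succ']
    by_cases h : m < v.length
    · rw [List.getElem?_append_left h, Nat.mod_eq_of_lt h]
    · push_neg at h
      rw [List.getElem?_append_right h,
        ih (m - v.length) (by rw [Nat.succ_mul] at hm; omega)]
      congr 1
      exact (Nat.mod_eq_sub_mod h).symm

lemma wordPrefix_getElem {A : Type*} (w : ℕ → A) (L : ℕ) {s : ℕ}
    (hs : s < (wordPrefix w L).length) : (wordPrefix w L)[s] = w s := by
  simp [wordPrefix, List.getElem_ofFn]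

/-- If `u` is an infinite non-periodic uniformly recurrent word and `v` is a
nonempty factor of `u`, then the set of integers `e` such that `v^e` is a factor of `u`
is finite. -/
theorem finite_exponents_of_uniformlyRecurrent
    {A : Type*} (u : ℕ → A) (hur : UniformlyRecurrent u) (hnp : ¬ Periodic u)
    (v : List A) (hv : v ≠ []) (hfac : IsFactor u v) :
    {e : ℕ | IsFactor u (wpow v e)}.Finite := by
  by_contra hinf
  have hinf : {e : ℕ | IsFactor u (wpow v e)}.Infinite := hinf
  apply hnp
  have hp1 : 1 ≤ v.length := List.length_pos_iff.mpr hv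
  refine ⟨v.length, hp1, ?_⟩
  intro k
  set p := v.length with hpdef
  have hplen : v.length = p := rfl
  set L := k + p + 1 with hLdef
  have hPlen : (wordPrefix u L).length = L := by simp [wordPrefix]; rfl
  have hPfac : IsFactor u (wordPrefix u L) :=
    ⟨0, occursAt_of_forall (by intro s hs; rw [wordPrefix_getElem u L hs]; simp)⟩
  obtain ⟨N, hN⟩ := hur _ hPfac
  obtain ⟨e, heS, he⟩ := hinf.exists_gt (N + L + p)
  obtain ⟨j, hj⟩ := heS
  obtain ⟨t, hjt, htN, hocc⟩ := hN j
  have hep : (wpow v e).length = e * p := wpow_length v e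
  -- values of u from the prefix occurrence at t
  have hval : ∀ s, s < L → u (t + s) = u s := by
    intro s hs
    have hs' : s < (wordPrefix u L).length := by omega
    have h1 := occursAt_getElem hocc hs'
    have h2 := wordPrefix_getElem u L hs'
    rw [h1] at h2
    exact h2
  -- values of u from the power occurrence at j
  have hup : ∀ m, m + p < e * p → u (j + (m + p)) = u (j + m) := by
    intro m hm
    have h1 : (wpow v e)[m + p]? = some (u (j + (m + p))) := by
      rw [List.getElem?_eq_getElem (by omega),
        occursAt_getElem hj (by omega)]
    have h2 : (wpow v e)[m]? = some (u (j + m)) := by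
      rw [List.getElem?_eq_getElem (by omega),
        occursAt_getElem hj (by omega)]
    have h3 : (wpow v e)[m + p]? = (wpow v e)[m]? := by
      rw [wpow_get? hv e _ hm, wpow_get? hv e m (by rw [hplen]; omega), Nat.add_mod_right]
    rw [h1, h2] at h3
    exact Option.some.inj h3
  -- assemble
  set d := t - j with hddef
  have htd : t = j + d := by omega
  have hd : d < N := by omega
  have hk1 : u k = u (j + (d + k)) := by
    rw [← hval k (by omega), htd, Nat.add_assoc]
  have hk2 : u (k + p) = u (j + (d + k + p)) := by
    rw [← hval (k + p) (by omega), htd]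
    ring_nf
  rw [hk1, hk2]
  apply hup
  have : e ≤ e * p := Nat.le_mul_of_pos_right e (by omega)
  omega
end

section
/- Let u be an infinite uniformly recurrent word, let w be a finite factor of u whose period p(w) is greater than |v| for some nonempty finite word v, and let m be the maximal return time of w in u (so that every factor of u of length m + |w| contains an occurrence of w). Then for every integer e such that v^e is a factor of u, one has |v^e| = e·|v| < m + |w|. -/
open scoped BigOperators ENNReal

open PeriodicityComplexity


section AuxLemmas

variable {A : Type*}

lemma aux_getElem?_of_occursAt {u : ℕ → A} {z : List A} {j : ℕ}
    (h : OccursAt u z j) (i : ℕ) (hi : i < z.length) : z[i]? = some (u (j + i)) := by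
  conv_lhs => rw [h]
  simp [List.getElem?_ofFn, List.ofFnNthVal, hi]

lemma aux_occursAt_ofFn (u : ℕ → A) (j n : ℕ) :
    OccursAt u (List.ofFn (fun t : Fin n => u (j + t))) j := by
  unfold OccursAt
  apply List.ext_getElem <;> simp

lemma aux_length_wpow (v : List A) (e : ℕ) : (wpow v e).length = e * v.length := by
  simp [wpow, List.length_flatten, List.map_replicate, mul_comm]

lemma aux_wpow_succ (v : List A) (e : ℕ) : wpow v (e + 1) = v ++ wpow v e := by
  simp [wpow, List.replicate_succ]

lemma aux_wpow_period (v : List A) (e t : ℕ) (ht : t + v.length < (wpow v e).length) :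
    (wpow v e)[t]? = (wpow v e)[t + v.length]? := by
  induction e generalizing t with
  | zero =>
    exfalso
    simp [aux_length_wpow] at ht
  | succ e ih =>
    have hlen := aux_length_wpow v e
    have hlen1 := aux_length_wpow v (e + 1)
    rw [aux_wpow_succ] at *
    have hlv : (v ++ wpow v e).length = v.length + (wpow v e).length := by simp
    by_cases hc : t < v.length
    · rw [List.getElem?_append_left hc, List.getElem?_append_right (by omega)]
      have h2 : t + v.length - v.length = t := by omega
      rw [h2]
      have hep : 0 < e := by
        by_contra h0
        have : e = 0 := by omega
        subst this
        simp [wpow] at ht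
      obtain ⟨e', rfl⟩ : ∃ e', e = e' + 1 := ⟨e - 1, by omega⟩
      rw [aux_wpow_succ]
      rw [List.getElem?_append_left hc]
    · push_neg at hc
      rw [List.getElem?_append_right hc, List.getElem?_append_right (by omega : v.length ≤ t + v.length)]
      have h2 : t + v.length - v.length = t := by omega
      rw [h2]
      have := ih (t - v.length) (by omega)
      have h3 : t - v.length + v.length = t := by omega
      rw [h3] at this
      exact this

end AuxLemmas

/-- Let `u` be uniformly recurrent, `w` a finite factor of `u` whose period
exceeds `|v|` for a nonempty finite word `v`, and let `m` be the maximal return time of `w`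
in `u`. Then every `e` with `v^e` a factor of `u` satisfies `e·|v| < m + |w|`. -/
theorem pow_length_lt_of_period_gt
    {A : Type*} (u : ℕ → A) (hur : UniformlyRecurrent u)
    (w v : List A) (hw : IsFactor u w) (hv : v ≠ [])
    (hp : v.length < periodF w)
    (m : ℕ) (hm : m = maxReturnTime u w) :
    ∀ e : ℕ, IsFactor u (wpow v e) → e * v.length < m + w.length := by
  classical
  intro e hve
  by_contra hcon
  push_neg at hcon
  -- occurrence of w
  obtain ⟨jw, hjw⟩ := hw
  -- uniform recurrence bound for w
  obtain ⟨N, hN⟩ := hur w ⟨jw, hjw⟩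
  -- return lengths are bounded by N
  have hbdd : BddAbove {l | IsReturnLength u w l} := by
    refine ⟨N, fun l hl => ?_⟩
    obtain ⟨r, ⟨hrne, j0, hj0, hj0l, hbet, _⟩, hrl⟩ := hl
    obtain ⟨t, ht1, ht2, ht3⟩ := hN (j0 + 1)
    by_cases hlt : t < j0 + r.length
    · exact absurd ht3 (hbet t (by omega) hlt)
    · omega
  -- occurrence of v^e at position ≥ jw
  obtain ⟨N', hN'⟩ := hur (wpow v e) hve
  obtain ⟨j', hj'1, _, hj'occ⟩ := hN' jw
  -- least occurrence of w at position ≥ j'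
  have hne : {t | j' ≤ t ∧ OccursAt u w t}.Nonempty := by
    obtain ⟨t, h1, h2, h3⟩ := hN j'
    exact ⟨t, h1, h3⟩
  obtain ⟨ht1ge, ht1occ⟩ := Nat.sInf_mem hne
  set t1 := sInf {t | j' ≤ t ∧ OccursAt u w t} with ht1def
  have ht1min : ∀ t, j' ≤ t → OccursAt u w t → t1 ≤ t := fun t h1 h2 => Nat.sInf_le ⟨h1, h2⟩
  by_cases hcase : t1 + w.length ≤ j' + e * v.length
  · -- good case: w occurs inside v^e, hence has period |v|
    have hv1 : 1 ≤ v.length := List.length_pos_iff.mpr hv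
    have h3 : ∀ i, i < e * v.length → (wpow v e)[i]? = some (u (j' + i)) := fun i hi =>
      aux_getElem?_of_occursAt hj'occ i (by rw [aux_length_wpow]; exact hi)
    have hper : HasPeriodF w v.length := by
      intro t htlt
      have h1 : w[t]? = some (u (t1 + t)) := by
        exact aux_getElem?_of_occursAt ht1occ t (by omega)
      have h2 : w[t + v.length]? = some (u (t1 + (t + v.length))) := by
        exact aux_getElem?_of_occursAt ht1occ (t + v.length) (by omega)
      have e1 : (wpow v e)[t1 - j' + t]? = some (u (t1 + t)) := by
        rw [h3 (t1 - j' + t) (by omega)]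
        congr 2
        omega
      have e2 : (wpow v e)[t1 - j' + t + v.length]? = some (u (t1 + (t + v.length))) := by
        rw [h3 (t1 - j' + t + v.length) (by omega)]
        congr 2
        omega
      have hp2 := aux_wpow_period v e (t1 - j' + t) (by rw [aux_length_wpow]; omega)
      rw [h1, h2, ← e1, ← e2]
      exact hp2
    have : periodF w ≤ v.length := Nat.sInf_le ⟨hv1, hper⟩
    omega
  · -- bad case: no occurrence of w within the first m positions of v^e
    push_neg at hcase
    have htm : j' + m < t1 := by omega
    have hSne : {t | OccursAt u w t ∧ t < t1}.Nonempty := ⟨jw, hjw, by omega⟩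
    have hSbdd : BddAbove {t | OccursAt u w t ∧ t < t1} := ⟨t1, fun t ht => le_of_lt ht.2⟩
    obtain ⟨htpocc, htplt⟩ := Nat.sSup_mem hSne hSbdd
    set tp := sSup {t | OccursAt u w t ∧ t < t1} with htpdef
    have htpmax : ∀ t, OccursAt u w t → t < t1 → t ≤ tp := fun t h1 h2 => le_csSup hSbdd ⟨h1, h2⟩
    have htpj : tp < j' := by
      by_contra h
      push_neg at h
      have := ht1min tp h htpocc
      omega
    have hlofn : (List.ofFn (fun t : Fin (t1 - tp) => u (tp + t))).length = t1 - tp := by simp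
    have hret : IsReturnLength u w (t1 - tp) := by
      refine ⟨List.ofFn (fun t : Fin (t1 - tp) => u (tp + t)),
        ⟨?_, tp, htpocc, ?_, ?_, aux_occursAt_ofFn u tp (t1 - tp)⟩, hlofn⟩
      · intro h
        rw [h] at hlofn
        simp at hlofn
        omega
      · rw [hlofn]
        have : tp + (t1 - tp) = t1 := by omega
        rw [this]
        exact ht1occ
      · intro t h1 h2 hocc
        rw [hlofn] at h2
        have := htpmax t hocc (by omega)
        omega
    have : t1 - tp ≤ m := by
      rw [hm]
      exact le_csSup hbdd hret
    omega
end

section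
/- Let u be an infinite word, let w be a nonempty unbordered finite word, and let e be the largest integer such that w^e is a factor of u. Then two distinct occurrences of w^e in u do not overlap: if j < j' are occurrences of w^e in u, then j' − j ≥ e·|w|. Consequently, w^e is a prefix of every return word to w^e in u. -/
open scoped BigOperators ENNReal

open PeriodicityComplexity

namespace PC6
variable {A : Type*}

lemma occursAt_iff {u : ℕ → A} {z : List A} {j : ℕ} :
    OccursAt u z j ↔ ∀ t (ht : t < z.length), z[t] = u (j + t) := by
  constructor
  · intro h t ht
    have := List.getElem_of_eq h ht
    simpa using this
  · intro h
    apply List.ext_getElem (by simp)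
    intro n h1 h2
    simp [h n h1]

lemma occursAt_append {u : ℕ → A} {x y : List A} {j : ℕ}
    (hx : OccursAt u x j) (hy : OccursAt u y (j + x.length)) :
    OccursAt u (x ++ y) j := by
  rw [occursAt_iff] at *
  intro t ht
  rcases lt_or_ge t x.length with h | h
  · rw [List.getElem_append_left h]; exact hx t h
  · rw [List.getElem_append_right h]
    have := hy (t - x.length) (by simp at ht; omega)
    rw [this]; congr 1; omega

lemma wpow_succ (v : List A) (e : ℕ) : wpow v (e+1) = v ++ wpow v e := by
  simp [wpow, List.replicate_succ]

lemma length_wpow (v : List A) (e : ℕ) : (wpow v e).length = e * v.length := by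
  induction e with
  | zero => simp [wpow]
  | succ e ih => rw [wpow_succ]; simp [ih]; ring

lemma occursAt_wpow {u : ℕ → A} {w : List A} {e j : ℕ} (h : OccursAt u (wpow w e) j)
    {q : ℕ} (hq : q < e) : OccursAt u w (j + q * w.length) := by
  induction e generalizing j q with
  | zero => omega
  | succ e ih =>
    rw [wpow_succ, occursAt_iff] at h
    rcases Nat.eq_zero_or_pos q with rfl | hq0
    · rw [occursAt_iff]
      intro t ht
      have := h t (by simp; omega)
      rw [List.getElem_append_left ht] at this
      simpa using this
    · have h2 : OccursAt u (wpow w e) (j + w.length) := by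
        rw [occursAt_iff]
        intro t ht
        have := h (w.length + t) (by simp; omega)
        rw [List.getElem_append_right (by omega)] at this
        simpa [Nat.add_assoc] using this
      obtain ⟨q', rfl⟩ : ∃ q', q = q' + 1 := ⟨q - 1, by omega⟩
      have := ih h2 (q := q') (by omega)
      have heq : j + w.length + q' * w.length = j + (q' + 1) * w.length := by ring
      rwa [heq] at this

lemma not_overlap {u : ℕ → A} {w : List A} (hw : w ≠ []) (hub : Unbordered w)
    {p s : ℕ} (h1 : OccursAt u w p) (h2 : OccursAt u w (p + s))
    (hs : 0 < s) (hsw : s < w.length) : False := by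
  rw [occursAt_iff] at h1 h2
  have key : w.drop s = w.take (w.length - s) := by
    apply List.ext_getElem (by simp only [List.length_drop, List.length_take]; omega)
    intro n hn1 hn2
    rw [List.getElem_drop, List.getElem_take]
    
    rw [h1 (s + n) (by simp at hn1; omega), h2 n (by simp at hn2; omega)]
    congr 1; omega
  have hbne : w.drop s ≠ [] := by
    simp [List.drop_eq_nil_iff]; omega
  have hblen : (w.drop s).length < w.length := by simp; omega
  have hbpre : w.drop s <+: w := key ▸ List.take_prefix _ _
  exact hub _ hbne hblen hbpre (List.drop_suffix s w)

lemma prefix_of_occurs {u : ℕ → A} {z r : List A} {j : ℕ}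
    (hz : OccursAt u z j) (hr : OccursAt u r j) (hl : z.length ≤ r.length) :
    z <+: r := by
  rw [occursAt_iff] at hz hr
  have : z = r.take z.length := by
    apply List.ext_getElem (by simp; omega)
    intro n hn1 hn2
    rw [List.getElem_take, hz n hn1, hr n (by omega)]
  exact this ▸ List.take_prefix _ _

end PC6

/-- Let `u` be an infinite word, `w` a nonempty unbordered finite word and
`e` the largest integer with `w^e` a factor of `u`. Then two distinct occurrences of `w^e`
in `u` do not overlap (`j < j'` occurrences imply `j' - j ≥ e·|w|`), and consequently `w^e`
is a prefix of every return word to `w^e` in `u`. -/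
theorem occurrences_of_maximal_power_do_not_overlap
    {A : Type*} (u : ℕ → A) (w : List A) (hw : w ≠ []) (hub : Unbordered w)
    (e : ℕ) (he1 : IsFactor u (wpow w e)) (he2 : ¬ IsFactor u (wpow w (e + 1))) :
    (∀ j j' : ℕ, OccursAt u (wpow w e) j → OccursAt u (wpow w e) j' → j < j' →
      e * w.length ≤ j' - j) ∧
    (∀ r : List A, IsReturnWord u (wpow w e) r → wpow w e <+: r) := by
  rcases Nat.eq_zero_or_pos e with rfl | hepos
  · constructor
    · intro j j' _ _ _; simp
    · intro r _
      show wpow w 0 <+: r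
      simp [wpow]
  · have hL : 0 < w.length := List.length_pos_iff.mpr hw
    have part1 : ∀ j j', OccursAt u (wpow w e) j → OccursAt u (wpow w e) j' → j < j' →
        e * w.length ≤ j' - j := by
      intro j j' h h' hlt
      by_contra hcon
      push_neg at hcon
      set d := j' - j with hd
      have hd0 : 0 < d := by omega
      obtain ⟨q, s, hds, hslt⟩ : ∃ q s, d = q * w.length + s ∧ s < w.length :=
        ⟨d / w.length, d % w.length, (Nat.div_add_mod' _ _).symm, Nat.mod_lt _ hL⟩
      rcases Nat.eq_zero_or_pos s with hs0 | hs
      · have hq0 : q ≠ 0 := by rintro rfl; simp at hds; omega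
        obtain ⟨q', rfl⟩ : ∃ q', q = q' + 1 := ⟨q - 1, by omega⟩
        have hmul : (q' + 1) * w.length < e * w.length := by omega
        have hq : q' + 1 < e := lt_of_mul_lt_mul_right hmul (Nat.zero_le _)
        have hw1 : OccursAt u w (j + q' * w.length) := PC6.occursAt_wpow h (by omega)
        have hj' : j + q' * w.length + w.length = j' := by
          have h1 : (q' + 1) * w.length = q' * w.length + w.length := by ring
          omega
        have hocc : OccursAt u (wpow w (e + 1)) (j + q' * w.length) := by
          rw [PC6.wpow_succ]
          exact PC6.occursAt_append hw1 (hj' ▸ h')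
        exact he2 ⟨_, hocc⟩
      · have hmul : q * w.length < e * w.length := by omega
        have hq : q < e := lt_of_mul_lt_mul_right hmul (Nat.zero_le _)
        have hw1 : OccursAt u w (j + q * w.length) := PC6.occursAt_wpow h hq
        have hw2 : OccursAt u w j' := by
          have := PC6.occursAt_wpow h' (q := 0) (by omega)
          simpa using this
        have hj' : j' = (j + q * w.length) + s := by omega
        exact PC6.not_overlap hw hub hw1 (hj' ▸ hw2) hs hslt
    refine ⟨part1, ?_⟩
    intro r hr
    obtain ⟨hne, j, hj1, hj2, -, hj4⟩ := hr
    have hrl : 0 < r.length := List.length_pos_iff.mpr hne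
    have hge := part1 j (j + r.length) hj1 hj2 (by omega)
    apply PC6.prefix_of_occurs hj1 hj4
    rw [PC6.length_wpow]; omega
end

section
/- For any nonempty finite words x and y, h(xy) ≥ (|x|·h(x) + |y|·h(y)) / |xy|, i.e. the sum of the local periods of xy over all its positions is at least the sum of the local periods of x over its positions plus the sum of the local periods of y over its positions. -/
open scoped BigOperators ENNReal

open PeriodicityComplexity

lemma repF_nonempty {A : Type*} (v : List A) (hv : v ≠ []) (i : ℕ) :
    ∃ r : List A, IsRepWordAtF v i r := by
  refine ⟨v.drop i ++ v.take i, ?_, Or.inr (List.suffix_append _ _),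
    Or.inr (List.prefix_append _ _)⟩
  intro h
  apply hv
  have hl := congrArg List.length h
  simp only [List.length_append, List.length_drop, List.length_take,
    List.length_nil] at hl
  exact List.eq_nil_of_length_eq_zero (by omega)

lemma repF_left {A : Type*} (x y : List A) {i : ℕ} (hi : i ≤ x.length)
    {r : List A} (h : IsRepWordAtF (x ++ y) i r) : IsRepWordAtF x i r := by
  obtain ⟨hne, hsuf, hpre⟩ := h
  rw [List.take_append_of_le_length hi] at hsuf
  rw [List.drop_append_of_le_length hi] at hpre
  refine ⟨hne, hsuf, ?_⟩
  rcases hpre with h1 | h1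
  · exact List.prefix_or_prefix_of_prefix h1 (List.prefix_append _ _)
  · exact Or.inr ((List.prefix_append _ _).trans h1)

lemma repF_right {A : Type*} (x y : List A) {i : ℕ} (hi : i ≤ y.length)
    {r : List A} (h : IsRepWordAtF (x ++ y) (x.length + i) r) : IsRepWordAtF y i r := by
  obtain ⟨hne, hsuf, hpre⟩ := h
  have htake : (x ++ y).take (x.length + i) = x ++ y.take i := by
    rw [List.take_append]
    simp
  have hdrop : (x ++ y).drop (x.length + i) = y.drop i := by
    rw [List.drop_append]
    simp
  rw [htake] at hsuf
  rw [hdrop] at hpre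
  refine ⟨hne, ?_, hpre⟩
  rcases hsuf with h1 | h1
  · exact List.suffix_or_suffix_of_suffix h1 (List.suffix_append _ _)
  · exact Or.inr ((List.suffix_append _ _).trans h1)

lemma localPeriodF_mono {A : Type*} {v w : List A} {i j : ℕ}
    (hw : w ≠ []) (h : ∀ r, IsRepWordAtF w j r → IsRepWordAtF v i r) :
    localPeriodF v i ≤ localPeriodF w j := by
  have hne : {n : ℕ | ∃ r : List A, IsRepWordAtF w j r ∧ r.length = n}.Nonempty := by
    obtain ⟨r, hr⟩ := repF_nonempty w hw j
    exact ⟨r.length, r, hr, rfl⟩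
  obtain ⟨r, hr, hn⟩ := Nat.sInf_mem hne
  exact Nat.sInf_le ⟨r, h r hr, hn⟩

lemma sum_localPeriodF_append {A : Type*} (x y : List A) (hx : x ≠ []) (hy : y ≠ []) :
    (∑ i ∈ Finset.Icc 1 x.length, localPeriodF x i) +
      (∑ i ∈ Finset.Icc 1 y.length, localPeriodF y i) ≤
    ∑ i ∈ Finset.Icc 1 (x ++ y).length, localPeriodF (x ++ y) i := by
  have hxy : x ++ y ≠ [] := by simp [hx]
  have key : ∀ (v : List A) (n : ℕ), (∑ i ∈ Finset.Icc 1 n, localPeriodF v i)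
      = ∑ i ∈ Finset.range n, localPeriodF v (1 + i) := by
    intro v n
    rw [← Finset.Ico_add_one_right_eq_Icc, Finset.sum_Ico_eq_sum_range]
    simp
  rw [List.length_append, key, key, key, Finset.sum_range_add]
  gcongr with i hi i hi
  · exact localPeriodF_mono hxy
      (fun r hr => repF_left x y (by simp at hi; omega) hr)
  · have : 1 + (x.length + i) = x.length + (1 + i) := by omega
    rw [this]
    exact localPeriodF_mono hxy
      (fun r hr => repF_right x y (by simp at hi; omega) hr)

/-- For nonempty finite words `x` and `y`,
`h(xy) ≥ (|x|·h(x) + |y|·h(y)) / |xy|`. -/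
theorem hF_append_ge
    {A : Type*} (x y : List A) (hx : x ≠ []) (hy : y ≠ []) :
    ((x.length : ℝ) * hF x + (y.length : ℝ) * hF y) / ((x ++ y).length : ℝ) ≤
      hF (x ++ y) := by
  have ha : (0:ℝ) < x.length := by
    exact_mod_cast List.length_pos_iff.mpr hx
  have hb : (0:ℝ) < y.length := by
    exact_mod_cast List.length_pos_iff.mpr hy
  have hsum := sum_localPeriodF_append x y hx hy
  unfold hF
  rw [mul_div_cancel₀ _ ha.ne', mul_div_cancel₀ _ hb.ne']
  rw [div_le_div_iff₀ (by rw [List.length_append]; push_cast; linarith)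
    (by rw [List.length_append]; push_cast; linarith)]
  ring_nf
  have : ((∑ i ∈ Finset.Icc 1 x.length, (localPeriodF x i : ℝ)) +
      ∑ i ∈ Finset.Icc 1 y.length, (localPeriodF y i : ℝ)) ≤
      ∑ i ∈ Finset.Icc 1 (x ++ y).length, (localPeriodF (x ++ y) i : ℝ) := by
    push_cast
    exact_mod_cast hsum
  nlinarith [Nat.cast_nonneg (α := ℝ) (x ++ y).length]
end

section
/- Let w = x v z be a factorization of a (finite or infinite) word w with x, z finite or z infinite, and let 1 ≤ i ≤ |v| be a position of v. Then p_v(i) ≤ p_w(|x| + i): the local period of w at the position corresponding to position i of the factor v is at least the local period of v at position i. -/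
open scoped BigOperators ENNReal

namespace PeriodicityComplexity

variable {A : Type*}

section Aux
variable {A : Type*}

private lemma key_construct (v : List A) (i p : ℕ) (hi1 : 1 ≤ i) (hi2 : i ≤ v.length) (hp : 1 ≤ p)
    (K : ∀ s, p ≤ i + s → s < p → ∀ _ : i + s < v.length,
      v[i + s - p]'(by omega) = v[i + s]'(by omega)) :
    ∃ r, IsRepWordAtF v i r ∧ r.length = p := by
  set f : Fin p → A := fun s =>
    if h1 : p ≤ i + s.val then v[i + s.val - p]'(by have := s.isLt; omega)
    else if h2 : i + s.val < v.length then v[i + s.val] else v[0]'(by omega) with hf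
  refine ⟨List.ofFn f, ⟨?_, ?_, ?_⟩, by simp⟩
  · intro h
    have : p = 0 := by simpa using congrArg List.length h
    omega
  · -- suffix comparability with v.take i
    by_cases hpi : p ≤ i
    · left
      have he : List.ofFn f = (v.take i).drop (i - p) := by
        apply List.ext_getElem
        · simp; omega
        · intro n h1 h2
          have hn : n < p := by simpa using h1
          rw [List.getElem_ofFn, List.getElem_drop, List.getElem_take]
          simp only [hf]
          rw [dif_pos (by omega)]
          congr 1
          omega
      rw [he]; exact List.drop_suffix _ _
    · right
      have he : v.take i = (List.ofFn f).drop (p - i) := by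
        apply List.ext_getElem
        · simp; omega
        · intro n h1 h2
          rw [List.getElem_drop, List.getElem_ofFn, List.getElem_take]
          simp only [hf]
          have hn : n < i := by simp at h1; omega
          rw [dif_pos (by omega)]
          congr 1
          omega
      rw [he]; exact List.drop_suffix _ _
  · -- prefix comparability with v.drop i
    by_cases hpv : p ≤ v.length - i
    · left
      have he : List.ofFn f = (v.drop i).take p := by
        apply List.ext_getElem
        · simp; omega
        · intro n h1 h2
          rw [List.getElem_ofFn, List.getElem_take, List.getElem_drop]
          simp only [hf]
          have hn : n < p := by simpa using h1
          by_cases hc : p ≤ i + n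
          · rw [dif_pos hc]; exact K n hc hn (by omega)
          · rw [dif_neg hc, dif_pos (by omega)]
      rw [he]; exact List.take_prefix _ _
    · right
      have he : v.drop i = (List.ofFn f).take (v.length - i) := by
        apply List.ext_getElem
        · simp; omega
        · intro n h1 h2
          rw [List.getElem_take, List.getElem_ofFn, List.getElem_drop]
          simp only [hf]
          have hn : n < v.length - i := by simpa using h1
          by_cases hc : p ≤ i + n
          · rw [dif_pos hc]; exact (K n hc (by omega) (by omega)).symm
          · rw [dif_neg hc, dif_pos (by omega)]
      rw [he]; exact List.take_prefix _ _

private lemma repF_nonempty (v : List A) (i : ℕ) (hi1 : 1 ≤ i) (hi2 : i ≤ v.length) :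
    {n : ℕ | ∃ r, IsRepWordAtF v i r ∧ r.length = n}.Nonempty := by
  refine ⟨v.length, v.drop i ++ v.take i, ⟨?_, Or.inr (List.suffix_append _ _),
    Or.inr (List.prefix_append _ _)⟩, ?_⟩
  · refine List.ne_nil_of_length_pos ?_
    simp
    omega
  · simp; omega

end Aux

end PeriodicityComplexity

open PeriodicityComplexity

/-- If `w = x v z` (with `z` finite, or `z` an infinite tail) and
`1 ≤ i ≤ |v|`, then the local period of `w` at position `|x| + i` is at least the local
period of `v` at position `i`. -/
theorem localPeriod_factor_le
    {A : Type*} :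
    (∀ (x v z : List A) (i : ℕ), 1 ≤ i → i ≤ v.length →
      localPeriodF v i ≤ localPeriodF (x ++ v ++ z) (x.length + i)) ∧
    (∀ (w : ℕ → A) (x v : List A) (i : ℕ), 1 ≤ i → i ≤ v.length →
      OccursAt w x 0 → OccursAt w v x.length →
      (localPeriodF v i : ℝ≥0∞) ≤ localPeriod w (x.length + i)) := by
  constructor
  · -- finite case
    intro x v z i hi1 hi2
    set W := x ++ v ++ z with hW
    set j := x.length + i with hj
    have hWlen : W.length = x.length + v.length + z.length := by simp [hW]; omega
    have hjW : j ≤ W.length := by omega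
    obtain ⟨r, hr, hrlen⟩ :=
      Nat.sInf_mem (repF_nonempty W j (by omega) hjW)
    obtain ⟨hrne, hrsuf, hrpre⟩ := hr
    set p := r.length with hplen
    have hp : 1 ≤ p := List.length_pos_iff.mpr hrne
    -- translation between W and v entries
    have hWv : ∀ m, m < v.length → W[x.length + m]? = v[m]? := by
      intro m hm
      rw [hW, List.getElem?_append (l₁ := x ++ v) (l₂ := z),
        if_pos (by simp; omega), List.getElem?_append_right (by omega)]
      congr 1
      omega
    -- value of r from the prefix side
    have hA : ∀ s, s < p → j + s < W.length → W[j + s]? = r[s]? := by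
      intro s hs hsW
      rcases hrpre with hpre | hpre
      · obtain ⟨t, ht⟩ := hpre
        rw [← List.getElem?_drop, ← ht, List.getElem?_append, if_pos hs]
      · obtain ⟨t, ht⟩ := hpre
        rw [← List.getElem?_drop (xs := W) (i := j) (j := s), ← ht,
          List.getElem?_append, if_pos (by simp; omega)]
    -- value of r from the suffix side
    have hB : ∀ s, s < p → p ≤ j + s → W[j + s - p]? = r[s]? := by
      intro s hs hps
      rcases hrsuf with hsuf | hsuf
      · obtain ⟨t, ht⟩ := hsuf
        have hlt : t.length + p = j := by
          have := congrArg List.length ht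
          simp at this
          omega
        calc W[j + s - p]? = (W.take j)[j + s - p]? := by
              rw [List.getElem?_take, if_pos (by omega)]
          _ = (t ++ r)[j + s - p]? := by rw [ht]
          _ = r[s]? := by
              rw [List.getElem?_append_right (by omega)]
              congr 1
              omega
      · obtain ⟨t, ht⟩ := hsuf
        have hlt : t.length + j = p := by
          have := congrArg List.length ht
          simp at this
          omega
        calc W[j + s - p]? = (W.take j)[j + s - p]? := by
              rw [List.getElem?_take, if_pos (by omega)]
          _ = (t ++ W.take j)[s]? := by
              rw [List.getElem?_append_right (by omega)]
              congr 1
              omega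
          _ = r[s]? := by rw [ht]
    -- the key combinatorial condition for v at position i
    have K : ∀ s, p ≤ i + s → s < p → ∀ _ : i + s < v.length,
        v[i + s - p]'(by omega) = v[i + s]'(by omega) := by
      intro s h1 h2 h3
      have a1 := hWv (i + s - p) (by omega)
      have a2 := hWv (i + s) h3
      rw [show x.length + (i + s - p) = j + s - p by omega] at a1
      rw [show x.length + (i + s) = j + s by omega] at a2
      have b1 := hB s h2 (by omega)
      have b2 := hA s h2 (by omega)
      have e1 : v[i + s - p]? = v[i + s]? := by
        rw [← a1, ← a2, b1, b2]
      rw [List.getElem?_eq_getElem (by omega), List.getElem?_eq_getElem (by omega)] at e1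
      exact Option.some.inj e1
    obtain ⟨r', hr', hr'len⟩ := key_construct v i p hi1 hi2 hp K
    have h1 : localPeriodF v i ≤ p := Nat.sInf_le ⟨r', hr', hr'len⟩
    have h2 : localPeriodF W j = p := hrlen.symm
    omega
  · -- infinite case
    intro w x v i hi1 hi2 hox hov
    set j := x.length + i with hj
    refine le_sInf ?_
    rintro b ⟨r, hr, rfl⟩
    obtain ⟨hrne, hrsuf, hrocc⟩ := hr
    set p := r.length with hplen
    have hp : 1 ≤ p := List.length_pos_iff.mpr hrne
    have hvm : ∀ m, m < v.length → v[m]? = some (w (x.length + m)) := by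
      intro m hm
      conv_lhs => rw [hov]
      rw [List.getElem?_ofFn]
      simp [List.ofFnNthVal, hm]
    have hA : ∀ s, s < p → r[s]? = some (w (j + s)) := by
      intro s hs
      conv_lhs => rw [hrocc]
      rw [List.getElem?_ofFn]
      simp [List.ofFnNthVal, hs, show s < r.length from hs]
    have hwp : ∀ m, m < j → (wordPrefix w j)[m]? = some (w m) := by
      intro m hm
      rw [wordPrefix, List.getElem?_ofFn]
      simp [List.ofFnNthVal, hm]
    have hwplen : (wordPrefix w j).length = j := by simp [wordPrefix]
    have hB : ∀ s, s < p → p ≤ j + s → r[s]? = some (w (j + s - p)) := by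
      intro s hs hps
      rcases hrsuf with hsuf | hsuf
      · obtain ⟨t, ht⟩ := hsuf
        have hlt : t.length + p = j := by
          have := congrArg List.length ht
          simpa [hwplen] using this
        calc r[s]? = (t ++ r)[t.length + s]? := by
              rw [List.getElem?_append_right (by omega)]
              congr 1
              omega
          _ = (wordPrefix w j)[t.length + s]? := by rw [ht]
          _ = some (w (j + s - p)) := by
              rw [hwp _ (by omega)]
              congr 2
              omega
      · obtain ⟨t, ht⟩ := hsuf
        have hlt : t.length + j = p := by
          have := congrArg List.length ht
          simpa [hwplen] using this
        calc r[s]? = (t ++ wordPrefix w j)[s]? := by rw [ht]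
          _ = (wordPrefix w j)[s - t.length]? := by
              rw [List.getElem?_append_right (by omega)]
          _ = some (w (j + s - p)) := by
              rw [hwp _ (by omega)]
              congr 2
              omega
    have K : ∀ s, p ≤ i + s → s < p → ∀ _ : i + s < v.length,
        v[i + s - p]'(by omega) = v[i + s]'(by omega) := by
      intro s h1 h2 h3
      have a1 := hvm (i + s - p) (by omega)
      have a2 := hvm (i + s) h3
      rw [show x.length + (i + s - p) = j + s - p by omega] at a1
      rw [show x.length + (i + s) = j + s by omega] at a2
      have b1 := hB s h2 (by omega)
      have b2 := hA s h2
      have e1 : v[i + s - p]? = v[i + s]? := by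
        rw [a1, a2, ← b1, ← b2]
      rw [List.getElem?_eq_getElem (by omega), List.getElem?_eq_getElem (by omega)] at e1
      exact Option.some.inj e1
    obtain ⟨r', hr', hr'len⟩ := key_construct v i p hi1 hi2 hp K
    have hle : localPeriodF v i ≤ p :=
      Nat.sInf_le (s := {n | ∃ r, IsRepWordAtF v i r ∧ r.length = n}) ⟨r', hr', hr'len⟩
    show (localPeriodF v i : ℝ≥0∞) ≤ (p : ℝ≥0∞)
    exact_mod_cast hle
end
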